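/- arXiv:1807.03768 — 4 statements merged into one kernel-verified Lean document; each statement's English description precedes it below -/
import Mathlib

section
/- Let δ, κ ≥ 1 be integers. If 𝒞 is an ideal of (δ,κ)-good graphs with unbounded chromatic number, then there exist a subideal 𝒞' of 𝒞 with unbounded chromatic number and a number c such that every matching-covered set in every member of 𝒞' has chromatic number at most c. -/
/-- Vertices of the tree `T(δ)`: a handle, δ (1,δ)-brooms and δ (2,δ)-brooms. -/
inductive TVert (δ : ℕ) : Type
  | handle : TVert δ
  | stem1 : Fin δ → TVert δ
  | leaf1 : Fin δ → Fin δ → TVert δ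
  | stem2 : Fin δ → TVert δ
  | end2 : Fin δ → TVert δ
  | leaf2 : Fin δ → Fin δ → TVert δ

/-- The tree `T(δ)`, formed from δ (1,δ)-brooms and δ (2,δ)-brooms by identifying handles. -/
def TGraph (δ : ℕ) : SimpleGraph (TVert δ) :=
  SimpleGraph.fromRel (fun u v =>
    (∃ i, u = TVert.handle ∧ v = TVert.stem1 i) ∨
    (∃ i m, u = TVert.stem1 i ∧ v = TVert.leaf1 i m) ∨
    (∃ j, u = TVert.handle ∧ v = TVert.stem2 j) ∨
    (∃ j, u = TVert.stem2 j ∧ v = TVert.end2 j) ∨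
    (∃ j m, u = TVert.end2 j ∧ v = TVert.leaf2 j m))

/-- `G` is `T(δ)`-free: no induced subgraph of `G` is isomorphic to `T(δ)`. -/
def TdeltaFree (δ : ℕ) {V : Type} (G : SimpleGraph V) : Prop :=
  IsEmpty (SimpleGraph.Embedding (TGraph δ) G)

/-- `N²[v]`: the set of vertices at distance at most 2 from `v`. -/
def Ball2 {V : Type} (G : SimpleGraph V) (v : V) : Set V :=
  {u | u = v ∨ G.Adj v u ∨ ∃ w, G.Adj v w ∧ G.Adj w u}

/-- `χ²(G) ≤ τ`: every ball of radius 2 induces a subgraph of chromatic number at most `τ`. -/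
def ChiTwoLe {V : Type} (G : SimpleGraph V) (τ : ℕ) : Prop :=
  ∀ v : V, (G.induce (Ball2 G v)).chromaticNumber ≤ (τ : ℕ∞)

/-- `X` is matching-covered in `G`. -/
def MatchingCovered {V : Type} (G : SimpleGraph V) (X : Set V) : Prop :=
  ∀ x ∈ X, ∃ y, y ∉ X ∧ G.Adj x y ∧ ∀ x' ∈ X, G.Adj x' y → x' = x

/-- `A` lists the parts of an `(a,b)`-core: `b` pairwise disjoint stable sets of size `a`,
complete to each other. -/
def IsCoreParts {V : Type} (G : SimpleGraph V) (a : ℕ) {b : ℕ} (A : Fin b → Set V) : Prop :=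
  (∀ i, (A i).encard = (a : ℕ∞)) ∧
  (∀ i j, i ≠ j → Disjoint (A i) (A j)) ∧
  (∀ i, ∀ x ∈ A i, ∀ y ∈ A i, ¬ G.Adj x y) ∧
  (∀ i j, i ≠ j → ∀ x ∈ A i, ∀ y ∈ A j, G.Adj x y)

/-- `G` admits an `(a,b)`-core. -/
def HasCore {V : Type} (G : SimpleGraph V) (a b : ℕ) : Prop :=
  ∃ A : Fin b → Set V, IsCoreParts G a A

/-- `v` is dense to the core with parts `A`: `v` is outside the core and has at least `α`
neighbours in each part. -/
def DenseTo {V : Type} (G : SimpleGraph V) (α : ℕ) {b : ℕ} (A : Fin b → Set V) (v : V) : Prop :=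
  v ∉ (⋃ i, A i) ∧ ∀ i, (α : ℕ∞) ≤ (A i ∩ G.neighborSet v).encard

/-- `v` is `η`-mixed on the core with parts `A`. -/
def MixedOn {V : Type} (G : SimpleGraph V) (α η : ℕ) {b : ℕ} (A : Fin b → Set V) (v : V) : Prop :=
  ¬ DenseTo G α A v ∧ ∃ i, (η : ℕ∞) ≤ (A i ∩ G.neighborSet v).encard

/-- Conditions (i)–(v) of the paper, for fixed `τ, α, δ, β, θ`. -/
def Conditions (τ α δ β : ℕ) (θ : ℕ → ℕ) {V : Type} (G : SimpleGraph V) : Prop :=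
  TdeltaFree δ G ∧
  ChiTwoLe G τ ∧
  (∀ X : Set V, MatchingCovered G X → (G.induce X).chromaticNumber ≤ (τ : ℕ∞)) ∧
  (∀ a : ℕ, 1 ≤ a → (θ a : ℕ∞) < G.chromaticNumber → HasCore G a β) ∧
  ¬ HasCore G α (β + 1)

/-- A `(ζ,η)`-template array in `G`: a template sequence `(Y i, Hs i) (i : Fin n)` together
with a set `U`.  `A i` gives the parts of the core `Y i = ⋃ k, A i k`. -/
structure TemplateArray {V : Type} (G : SimpleGraph V) (α β ζ η : ℕ) (n : ℕ) where
  A : Fin n → Fin β → Set V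
  Hs : Fin n → Set V
  U : Set V
  core : ∀ i, IsCoreParts G ζ (A i)
  core_subset : ∀ i, (⋃ k, A i k) ⊆ Hs i
  mixed : ∀ i, ∀ v ∈ Hs i, MixedOn G α η (A i) v
  H_disj : ∀ i j, i ≠ j → Disjoint (Hs i) (Hs j)
  no_edge : ∀ i j : Fin n, i < j → ∀ u ∈ Hs i, ∀ y ∈ (⋃ k, A j k), ¬ G.Adj u y
  not_mixed : ∀ i j : Fin n, i < j → ∀ v ∈ Hs j, ¬ MixedOn G α η (A i) v
  U_not_H : ∀ v ∈ U, ∀ i, v ∉ Hs i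
  U_not_mixed : ∀ v ∈ U, ∀ i, ¬ MixedOn G α η (A i) v
  U_nbr : ∀ v ∈ U, ∃ i, ∃ u ∈ Hs i, G.Adj v u

namespace TemplateArray

variable {V : Type} {G : SimpleGraph V} {α β ζ η n : ℕ}

/-- The core `Y_i` of the template array. -/
def Y (T : TemplateArray G α β ζ η n) (i : Fin n) : Set V := ⋃ k, T.A i k

/-- `H(𝒯) = H_1 ∪ ⋯ ∪ H_n`. -/
def Hall (T : TemplateArray G α β ζ η n) : Set V := ⋃ i, T.Hs i

/-- `Y(𝒯) = Y_1 ∪ ⋯ ∪ Y_n`. -/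
def Yall (T : TemplateArray G α β ζ η n) : Set V := ⋃ i, T.Y i

/-- `Z(𝒯) = H(𝒯) \ Y(𝒯)`. -/
def Zall (T : TemplateArray G α β ζ η n) : Set V := T.Hall \ T.Yall

/-- `V(𝒯) = H(𝒯) ∪ U(𝒯)`. -/
def Vall (T : TemplateArray G α β ζ η n) : Set V := T.Hall ∪ T.U

/-- The template array is 1-cleaned: no vertex of `V(𝒯)` is dense to any `Y_i`. -/
def Cleaned1 (T : TemplateArray G α β ζ η n) : Prop :=
  ∀ i : Fin n, ∀ v ∈ T.Vall, ¬ DenseTo G α (T.A i) v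

/-- The template array is 2-cleaned. -/
def Cleaned2 (T : TemplateArray G α β ζ η n) : Prop :=
  T.Cleaned1 ∧
  (∀ i j : Fin n, i ≠ j → ∀ u ∈ T.Hs i, ∀ w ∈ T.Hs j, ¬ G.Adj u w) ∧
  (∀ i : Fin n, ∀ u ∈ T.Hs i \ T.Y i, ∀ w ∈ T.Hs i \ T.Y i, ¬ G.Adj u w)

/-- A privatization for the template array. -/
def Privatization (T : TemplateArray G α β ζ η n) (δ τ : ℕ) (P : Set V) : Prop :=
  P ⊆ T.U ∧
  (∃ M : Fin (δ * τ) → Set V, (⋃ i, M i) = P ∧ ∀ i, MatchingCovered G (M i)) ∧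
  (∀ v ∈ P, (T.Zall ∩ G.neighborSet v).encard = 1 ∧ ∀ y ∈ T.Yall, ¬ G.Adj v y) ∧
  (∀ z ∈ T.Zall, (P ∩ G.neighborSet z).encard = ((δ * τ : ℕ) : ℕ∞))

/-- `B` is a shadowing of the template array. -/
def Shadowing (T : TemplateArray G α β ζ η n) (B : Fin n → Set V) : Prop :=
  (∀ i, B i ⊆ T.U) ∧
  (∀ i j, i ≠ j → Disjoint (B i) (B j)) ∧
  (⋃ i, B i) = T.U ∧
  (∀ i, ∀ v ∈ B i, ∃ u ∈ T.Hs i, G.Adj v u)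

/-- The shadowing `B` has degree at most `s` relative to `X`. -/
def DegreeLeRel (T : TemplateArray G α β ζ η n) (B : Fin n → Set V) (s : ℕ) (X : Set V) :
    Prop :=
  ∀ v ∈ T.Vall, ({i : Fin n | ∃ u ∈ B i ∩ X, G.Adj v u}).encard ≤ (s : ℕ∞)

/-- `(u, v, P)` is a daisy with root `u`, eye `v` and petal set `P`, with respect to the
template array and the shadowing `B`. -/
def IsDaisy (T : TemplateArray G α β ζ η n) (δ : ℕ) (B : Fin n → Set V)
    (u v : V) (P : Set V) : Prop :=
  (∃ i, u ∈ T.Hs i ∧ ∃ j, j ≠ i ∧ P ⊆ B j) ∧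
  v ∈ T.U ∧
  P.encard = (δ : ℕ∞) ∧
  u ∉ P ∧ v ∉ P ∧ u ≠ v ∧
  G.Adj u v ∧
  (∀ p ∈ P, G.Adj v p) ∧
  (∀ p ∈ P, ¬ G.Adj u p) ∧
  (∀ p ∈ P, ∀ q ∈ P, ¬ G.Adj p q)

/-- `{(u j, v j, P j) : j ∈ J}` is a bunch of daisies with all roots in `Hs i`. -/
def IsBunch (T : TemplateArray G α β ζ η n) (δ : ℕ) (B : Fin n → Set V) (i : Fin n)
    (J : Set (Fin n)) (u v : Fin n → V) (P : Fin n → Set V) : Prop :=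
  i ∉ J ∧
  (∀ j ∈ J, T.IsDaisy δ B (u j) (v j) (P j)) ∧
  (∀ j ∈ J, u j ∈ T.Hs i) ∧
  (∀ j ∈ J, P j ⊆ B j) ∧
  (∀ j ∈ J, ∀ j' ∈ J, j ≠ j' → Disjoint (P j ∪ {v j}) (P j' ∪ {v j'})) ∧
  (∀ j ∈ J, ∀ j' ∈ J, j ≠ j' → ∀ x ∈ P j ∪ {v j}, ∀ y ∈ P j' ∪ {v j'}, ¬ G.Adj x y) ∧
  (∀ j ∈ J, ∀ j' ∈ J, j ≠ j' → ∀ p ∈ P j', ¬ G.Adj (u j) p)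

end TemplateArray

/-- A class of graphs (on arbitrary vertex types). -/
def GraphClass : Type 1 := ∀ V : Type, SimpleGraph V → Prop

/-- An ideal of graphs: closed under (copies of) induced subgraphs. -/
def IsIdeal (C : GraphClass) : Prop :=
  ∀ (V W : Type) (G : SimpleGraph V) (H : SimpleGraph W),
    C V G → Nonempty (SimpleGraph.Embedding H G) → C W H

/-- The class `C` has unbounded chromatic number. -/
def UnboundedChi (C : GraphClass) : Prop :=
  ∀ c : ℕ, ∃ (V : Type) (G : SimpleGraph V), C V G ∧ (c : ℕ∞) < G.chromaticNumber

/-- `G` is `(δ,κ)`-good: `T(δ)`-free with clique number at most `κ`. -/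
def GoodGraph (δ κ : ℕ) {V : Type} (G : SimpleGraph V) : Prop :=
  TdeltaFree δ G ∧ G.CliqueFree (κ + 1)


section Aux

/-- The image of an induced subgraph under an embedding, as an iso. -/
noncomputable def embInduceIso {W V : Type} {H : SimpleGraph W} {G : SimpleGraph V}
    (f : H ↪g G) (X : Set W) : H.induce X ≃g G.induce (⇑f '' X) := by
  refine ⟨Equiv.ofBijective (fun a => ⟨f a.1, ⟨a.1, a.2, rfl⟩⟩) ⟨?_, ?_⟩, ?_⟩
  · intro a b hab
    simp only [Subtype.mk.injEq] at hab
    exact Subtype.ext (f.injective (congrArg Subtype.val hab))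
  · rintro ⟨v, ⟨w, hw, rfl⟩⟩
    exact ⟨⟨w, hw⟩, rfl⟩
  · intro a b
    simp only [Equiv.ofBijective_apply, SimpleGraph.comap_adj, Function.Embedding.coe_subtype]
    exact f.map_rel_iff

lemma iso_chromaticNumber_eq {W V : Type} {H : SimpleGraph W} {G : SimpleGraph V}
    (e : H ≃g G) : H.chromaticNumber = G.chromaticNumber :=
  le_antisymm (SimpleGraph.chromaticNumber_mono_of_hom e.toEmbedding.toHom)
    (SimpleGraph.chromaticNumber_mono_of_hom e.symm.toEmbedding.toHom)

lemma mc_image {W V : Type} {H : SimpleGraph W} {G : SimpleGraph V}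
    (f : H ↪g G) {X : Set W} (hX : MatchingCovered H X) :
    MatchingCovered G (⇑f '' X) := by
  rintro x ⟨w, hw, rfl⟩
  obtain ⟨y, hyX, hadj, hpriv⟩ := hX w hw
  refine ⟨f y, ?_, f.map_rel_iff.2 hadj, ?_⟩
  · rintro ⟨z, hz, hzy⟩
    exact hyX (f.injective hzy ▸ hz)
  · rintro x' ⟨z, hz, rfl⟩ hadj'
    exact congrArg f (hpriv z hz (f.map_rel_iff.1 hadj'))


namespace TVert

def parent {δ : ℕ} : TVert δ → TVert δ
  | handle => handle
  | stem1 _ => handle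
  | leaf1 i _ => stem1 i
  | stem2 _ => handle
  | end2 j => stem2 j
  | leaf2 j _ => end2 j

def lv {δ : ℕ} : TVert δ → ℕ
  | handle => 2*(δ*δ) + 3*δ + 1
  | leaf1 i m => 1 + (i.1*δ + m.1)
  | leaf2 j m => 1 + δ*δ + (j.1*δ + m.1)
  | end2 j => 1 + 2*(δ*δ) + j.1
  | stem2 j => 1 + 2*(δ*δ) + δ + j.1
  | stem1 i => 1 + 2*(δ*δ) + 2*δ + i.1

lemma pair_lt {δ : ℕ} (i m : Fin δ) : i.1*δ + m.1 < δ*δ := by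
  calc i.1*δ + m.1 < i.1*δ + δ := by omega
  _ = (i.1+1)*δ := by ring
  _ ≤ δ*δ := Nat.mul_le_mul_right δ i.2

lemma pair_inj {δ : ℕ} {i m i' m' : Fin δ} (h : i.1*δ + m.1 = i'.1*δ + m'.1) :
    i = i' ∧ m = m' := by
  have hm := m.2; have hm' := m'.2
  have hii : i.1 = i'.1 := by
    rcases Nat.lt_trichotomy i.1 i'.1 with hlt | he | hgt
    · have : (i.1+1)*δ ≤ i'.1*δ := Nat.mul_le_mul_right δ hlt
      nlinarith
    · exact he
    · have : (i'.1+1)*δ ≤ i.1*δ := Nat.mul_le_mul_right δ hgt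
      nlinarith
  rw [hii] at h
  exact ⟨Fin.ext hii, Fin.ext (by omega)⟩

lemma lv_pos {δ : ℕ} (t : TVert δ) : 1 ≤ lv t := by
  cases t <;> simp [lv] <;> omega

lemma lv_le {δ : ℕ} (t : TVert δ) (ht : t ≠ handle) : lv t ≤ 2*(δ*δ) + 3*δ := by
  cases t with
  | handle => exact absurd rfl ht
  | stem1 i => have := i.2; simp [lv]; omega
  | leaf1 i m => have := pair_lt i m; simp [lv]; omega
  | stem2 j => have := j.2; simp [lv]; omega
  | end2 j => have := j.2; simp [lv]; omega
  | leaf2 j m => have := pair_lt j m; simp [lv]; omega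

lemma lv_le' {δ : ℕ} (t : TVert δ) : lv t ≤ 2*(δ*δ) + 3*δ + 1 := by
  by_cases ht : t = handle
  · subst ht; simp [lv]
  · exact le_trans (lv_le t ht) (by omega)

lemma lv_handle {δ : ℕ} : lv (handle : TVert δ) = 2*(δ*δ) + 3*δ + 1 := rfl

lemma lv_child_lt {δ : ℕ} (t : TVert δ) (ht : t ≠ handle) : lv t < lv (parent t) := by
  cases t with
  | handle => exact absurd rfl ht
  | stem1 i => have := i.2; simp [lv, parent]; omega
  | leaf1 i m => have h1 := pair_lt i m; have := i.2; simp [lv, parent]; nlinarith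
  | stem2 j => have := j.2; simp [lv, parent]; omega
  | end2 j => have := j.2; simp [lv, parent]; omega
  | leaf2 j m => have h1 := pair_lt j m; have := j.2; simp [lv, parent]; nlinarith

lemma lv_inj {δ : ℕ} : Function.Injective (lv (δ := δ)) := by
  intro s t h
  cases s <;> cases t <;> simp only [lv] at h ⊢
  all_goals first
    | rfl
    | (exact absurd h (by
        first
        | (rename_i i m i' m'
           have := pair_lt i m; have := pair_lt i' m'
           have := i.2; have := m.2; have := i'.2; have := m'.2; omega)
        | (rename_i i i' m'
           have := pair_lt i' m'; have := i.2; have := i'.2; have := m'.2; omega)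
        | (rename_i i m i'
           have := pair_lt i m; have := i.2; have := m.2; have := i'.2; omega)
        | (rename_i i i'
           have := i.2; have := i'.2; omega)
        | (rename_i i
           have := i.2; omega)
        | (rename_i i m
           have := pair_lt i m; have := i.2; have := m.2; omega)))
    | (rename_i i m i' m'
       obtain ⟨h1, h2⟩ := pair_inj (δ := δ) (by omega : i.1*δ + m.1 = i'.1*δ + m'.1)
       rw [h1, h2])
    | (rename_i i i'
       have : i = i' := Fin.ext (by omega)
       rw [this])

lemma adj_parent {δ : ℕ} (t : TVert δ) (ht : t ≠ handle) : (TGraph δ).Adj (parent t) t := by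
  rw [TGraph, SimpleGraph.fromRel_adj]
  cases t with
  | handle => exact absurd rfl ht
  | stem1 i => exact ⟨by simp [parent], Or.inl (Or.inl ⟨i, rfl, rfl⟩)⟩
  | leaf1 i m => exact ⟨by simp [parent], Or.inl (Or.inr (Or.inl ⟨i, m, rfl, rfl⟩))⟩
  | stem2 j => exact ⟨by simp [parent], Or.inl (Or.inr (Or.inr (Or.inl ⟨j, rfl, rfl⟩)))⟩
  | end2 j => exact ⟨by simp [parent], Or.inl (Or.inr (Or.inr (Or.inr (Or.inl ⟨j, rfl, rfl⟩))))⟩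
  | leaf2 j m =>
      exact ⟨by simp [parent], Or.inl (Or.inr (Or.inr (Or.inr (Or.inr ⟨j, m, rfl, rfl⟩))))⟩

lemma adj_cases {δ : ℕ} {a b : TVert δ} (h : (TGraph δ).Adj a b) :
    (b ≠ handle ∧ a = parent b) ∨ (a ≠ handle ∧ b = parent a) := by
  rw [TGraph, SimpleGraph.fromRel_adj] at h
  obtain ⟨-, h | h⟩ := h
  · rcases h with ⟨i, rfl, rfl⟩ | ⟨i, m, rfl, rfl⟩ | ⟨j, rfl, rfl⟩ | ⟨j, rfl, rfl⟩ |
      ⟨j, m, rfl, rfl⟩ <;> exact Or.inl ⟨by simp, by simp [parent]⟩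
  · rcases h with ⟨i, rfl, rfl⟩ | ⟨i, m, rfl, rfl⟩ | ⟨j, rfl, rfl⟩ | ⟨j, rfl, rfl⟩ |
      ⟨j, m, rfl, rfl⟩ <;> exact Or.inr ⟨by simp, by simp [parent]⟩

end TVert

open TVert in
lemma embed_of_chain {V : Type} (G : SimpleGraph V) (δ : ℕ)
    (S : ℕ → Set V)
    (hsub : ∀ k, 1 ≤ k → k ≤ 2*(δ*δ)+3*δ → S k ⊆ S (k-1))
    (hmc : ∀ k, 1 ≤ k → k ≤ 2*(δ*δ)+3*δ → ∀ x ∈ S k, ∃ y, y ∈ S (k-1) ∧ y ∉ S k ∧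
      G.Adj x y ∧ ∀ x' ∈ S k, G.Adj x' y → x' = x)
    (h0 : V) (hh0 : h0 ∈ S (2*(δ*δ)+3*δ)) :
    Nonempty (SimpleGraph.Embedding (TGraph δ) G) := by
  classical
  set N := 2*(δ*δ)+3*δ with hN
  -- antitonicity of the chain
  have S_anti : ∀ j k, j ≤ k → k ≤ N → S k ⊆ S j := by
    intro j k
    induction k with
    | zero =>
      intro hjk _
      have hj : j = 0 := by omega
      rw [hj]
    | succ n ih =>
      intro hjk hkN
      rcases Nat.eq_or_lt_of_le hjk with he | hlt
      · rw [he]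
      · intro x hx
        have h1 : S (n+1) ⊆ S n := by
          have := hsub (n+1) (by omega) hkN
          simpa using this
        exact ih (by omega) (by omega) (h1 hx)
  -- proof-irrelevant pendant choice
  have hmc' : ∀ k x, ∃ y, (1 ≤ k → k ≤ N → x ∈ S k → y ∈ S (k-1) ∧ y ∉ S k ∧
      G.Adj x y ∧ ∀ x' ∈ S k, G.Adj x' y → x' = x) := by
    intro k x
    by_cases h : 1 ≤ k ∧ k ≤ N ∧ x ∈ S k
    · obtain ⟨y, hy⟩ := hmc k h.1 h.2.1 x h.2.2
      exact ⟨y, fun _ _ _ => hy⟩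
    · exact ⟨x, fun h1 h2 h3 => absurd ⟨h1, h2, h3⟩ h⟩
  choose pend hpend using hmc'
  -- the candidate embedding
  let f : TVert δ → V := fun t =>
    match t with
    | .handle => h0
    | .stem1 i => pend (lv (stem1 i)) h0
    | .stem2 j => pend (lv (stem2 j)) h0
    | .end2 j => pend (lv (end2 j)) (pend (lv (stem2 j)) h0)
    | .leaf1 i m => pend (lv (leaf1 i m)) (pend (lv (stem1 i)) h0)
    | .leaf2 j m => pend (lv (leaf2 j m)) (pend (lv (end2 j)) (pend (lv (stem2 j)) h0))
  have hfp : ∀ t : TVert δ, t ≠ handle → f t = pend (lv t) (f (parent t)) := by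
    intro t ht
    cases t with
    | handle => exact absurd rfl ht
    | stem1 i => rfl
    | stem2 j => rfl
    | end2 j => rfl
    | leaf1 i m => rfl
    | leaf2 j m => rfl
  have step : ∀ t : TVert δ, t ≠ handle → f (parent t) ∈ S (lv t) →
      f t ∈ S (lv t - 1) ∧ f t ∉ S (lv t) ∧ G.Adj (f (parent t)) (f t) ∧
        ∀ x' ∈ S (lv t), G.Adj x' (f t) → x' = f (parent t) := by
    intro t ht hp
    rw [hfp t ht]
    exact hpend (lv t) (f (parent t)) (lv_pos t) (lv_le t ht) hp
  have mem : ∀ t : TVert δ, f t ∈ S (lv t - 1) := by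
    have hh : f handle ∈ S N := hh0
    have hs1 : ∀ i : Fin δ, f (stem1 i) ∈ S (lv (stem1 (δ := δ) i) - 1) := fun i =>
      (step (stem1 i) (by simp) (S_anti _ N (lv_le _ (by simp)) le_rfl hh0)).1
    have hs2 : ∀ j : Fin δ, f (stem2 j) ∈ S (lv (stem2 (δ := δ) j) - 1) := fun j =>
      (step (stem2 j) (by simp) (S_anti _ N (lv_le _ (by simp)) le_rfl hh0)).1
    have he2 : ∀ j : Fin δ, f (end2 j) ∈ S (lv (end2 (δ := δ) j) - 1) := by
      intro j
      refine (step (end2 j) (by simp) ?_).1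
      have hlt := lv_child_lt (end2 (δ := δ) j) (by simp)
      have hle := lv_le (stem2 (δ := δ) j) (by simp)
      exact S_anti _ _ (by simp [parent] at hlt ⊢; omega) (by omega) (hs2 j)
    intro t
    cases t with
    | handle => exact hh0
    | stem1 i => exact hs1 i
    | stem2 j => exact hs2 j
    | end2 j => exact he2 j
    | leaf1 i m =>
      refine (step (leaf1 i m) (by simp) ?_).1
      have hlt := lv_child_lt (leaf1 (δ := δ) i m) (by simp)
      have hle := lv_le (stem1 (δ := δ) i) (by simp)
      exact S_anti _ _ (by simp [parent] at hlt ⊢; omega) (by omega) (hs1 i)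
    | leaf2 j m =>
      refine (step (leaf2 j m) (by simp) ?_).1
      have hlt := lv_child_lt (leaf2 (δ := δ) j m) (by simp)
      have hle := lv_le (end2 (δ := δ) j) (by simp)
      exact S_anti _ _ (by simp [parent] at hlt ⊢; omega) (by omega) (he2 j)
  have spec : ∀ t : TVert δ, t ≠ handle →
      f t ∈ S (lv t - 1) ∧ f t ∉ S (lv t) ∧ G.Adj (f (parent t)) (f t) ∧
        ∀ x' ∈ S (lv t), G.Adj x' (f t) → x' = f (parent t) := by
    intro t ht
    refine step t ht ?_
    have h1 := lv_child_lt t ht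
    have h2 := lv_le' (parent (δ := δ) t)
    exact S_anti _ _ (by omega) (by omega) (mem (parent t))
  have Hne : ∀ a b : TVert δ, lv a < lv b → f a ≠ f b := by
    intro a b hab
    have ha : a ≠ handle := by
      intro h; subst h
      have := lv_le' b
      rw [lv_handle] at hab; omega
    have h1 : f a ∉ S (lv a) := (spec a ha).2.1
    have h2 : f b ∈ S (lv a) := by
      refine S_anti _ _ (by omega) ?_ (mem b)
      have := lv_le' b; omega
    intro h; rw [h] at h1; exact h1 h2
  have finj : Function.Injective f := by
    intro a b hab
    rcases Nat.lt_trichotomy (lv a) (lv b) with h | h | h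
    · exact absurd hab (Hne a b h)
    · exact lv_inj h
    · exact absurd hab.symm (Hne b a h)
  have M : ∀ a b : TVert δ, lv b < lv a → G.Adj (f a) (f b) → (TGraph δ).Adj a b := by
    intro a b hlv hadj
    have hb : b ≠ handle := by
      intro h; subst h
      have := lv_le' a
      rw [lv_handle] at hlv; omega
    have hfa : f a ∈ S (lv b) := by
      refine S_anti _ _ (by omega) ?_ (mem a)
      have := lv_le' a; omega
    have := (spec b hb).2.2.2 (f a) hfa hadj
    have hab : a = parent b := finj this
    rw [hab]
    exact adj_parent b hb
  refine ⟨⟨⟨f, finj⟩, ?_⟩⟩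
  intro a b
  constructor
  · intro hadj
    simp only [Function.Embedding.coeFn_mk] at hadj
    rcases Nat.lt_trichotomy (lv a) (lv b) with h | h | h
    · exact (M b a h hadj.symm).symm
    · exact absurd (lv_inj h) (fun he => G.irrefl (he ▸ hadj))
    · exact M a b h hadj
  · intro hadj
    simp only [Function.Embedding.coeFn_mk]
    rcases adj_cases hadj with ⟨hb, hab⟩ | ⟨ha, hba⟩
    · have := (spec b hb).2.2.1
      rw [← hab] at this; exact this
    · have := (spec a ha).2.2.1
      rw [← hba] at this; exact this.symm


end Aux

/-- if 𝒞 is an ideal of (δ,κ)-good graphs with unbounded chromatic number,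
then there is a subideal 𝒞' with unbounded chromatic number and a number c such that every
matching-covered set in every member of 𝒞' has chromatic number at most c. -/
theorem statement2 (δ κ : ℕ) (hδ : 1 ≤ δ) (hκ : 1 ≤ κ) (C : GraphClass)
    (hideal : IsIdeal C)
    (hgood : ∀ (V : Type) (G : SimpleGraph V), C V G → GoodGraph δ κ G)
    (hunb : UnboundedChi C) :
    ∃ (C' : GraphClass) (c : ℕ),
      IsIdeal C' ∧ (∀ (V : Type) (G : SimpleGraph V), C' V G → C V G) ∧
      UnboundedChi C' ∧
      ∀ (V : Type) (G : SimpleGraph V), C' V G →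
        ∀ X : Set V, MatchingCovered G X → (G.induce X).chromaticNumber ≤ (c : ℕ∞) := by
  classical
  set C' : ℕ → GraphClass := fun c => fun V G =>
    C V G ∧ ∀ X : Set V, MatchingCovered G X → (G.induce X).chromaticNumber ≤ (c : ℕ∞)
    with hC'
  have hidealC' : ∀ c, IsIdeal (C' c) := by
    intro c V W G H hG hf
    obtain ⟨f⟩ := hf
    refine ⟨hideal V W G H hG.1 ⟨f⟩, ?_⟩
    intro X hX
    have h1 := hG.2 (⇑f '' X) (mc_image f hX)
    rw [← iso_chromaticNumber_eq (embInduceIso f X)] at h1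
    exact h1
  have hsubC' : ∀ c V G, C' c V G → C V G := fun c V G h => h.1
  by_cases hpos : ∃ c, UnboundedChi (C' c)
  · obtain ⟨c, hc⟩ := hpos
    exact ⟨C' c, c, hidealC' c, hsubC' c, hc, fun V G hG => hG.2⟩
  exfalso
  push_neg at hpos
  have hbnd0 : ∀ c : ℕ, ∃ b : ℕ, ∀ (V : Type) (G : SimpleGraph V), C' c V G →
      G.chromaticNumber ≤ (b : ℕ∞) := by
    intro c
    have h := hpos c
    unfold UnboundedChi at h
    push_neg at h
    exact h
  choose bnd hbnd using hbnd0
  set b : ℕ → ℕ := fun m => Nat.rec 0 (fun _ prev => bnd prev) m with hb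
  have hbsucc : ∀ m, b (m+1) = bnd (b m) := fun m => rfl
  set N := 2*(δ*δ) + 3*δ with hN
  obtain ⟨V, G, hG, hχ⟩ := hunb (b N)
  have chain : ∀ n, n ≤ N → ∃ S : ℕ → Set V,
      (∀ k, 1 ≤ k → k ≤ n → S k ⊆ S (k-1) ∧ ∀ x ∈ S k, ∃ y, y ∈ S (k-1) ∧ y ∉ S k ∧
        G.Adj x y ∧ ∀ x' ∈ S k, G.Adj x' y → x' = x) ∧
      ((b (N - n) : ℕ∞) < (G.induce (S n)).chromaticNumber) := by
    intro n
    induction n with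
    | zero =>
      intro _
      refine ⟨fun _ => Set.univ, fun k hk1 hk2 => absurd hk1 (by omega), ?_⟩
      rw [iso_chromaticNumber_eq (SimpleGraph.induceUnivIso G)]
      simpa using hχ
    | succ n ih =>
      intro hn
      obtain ⟨S, hlinks, hSχ⟩ := ih (by omega)
      have hmem : C ↥(S n) (G.induce (S n)) :=
        hideal V ↥(S n) G (G.induce (S n)) hG ⟨SimpleGraph.Embedding.induce (S n)⟩
      have hnot : ¬ C' (b (N - (n+1))) ↥(S n) (G.induce (S n)) := by
        intro hmem'
        have h1 := hbnd _ _ _ hmem'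
        have h2 : b (N - n) = bnd (b (N - (n+1))) := by
          have h3 : N - n = (N - (n+1)) + 1 := by omega
          rw [h3, hbsucc]
        rw [h2] at hSχ
        exact absurd h1 (not_le.2 hSχ)
      simp only [hC'] at hnot
      push_neg at hnot
      obtain ⟨X, hXmc, hXχ⟩ := hnot hmem
      set T : Set V := Subtype.val '' X with hT
      have himg : ⇑(SimpleGraph.Embedding.induce (G := G) (S n)) '' X = T := rfl
      refine ⟨fun k => if k ≤ n then S k else T, ?_, ?_⟩
      · intro k hk1 hk2
        beta_reduce
        by_cases hkn : k ≤ n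
        · rw [if_pos hkn, if_pos (show k - 1 ≤ n by omega)]
          exact hlinks k hk1 hkn
        · have hk : k = n + 1 := by omega
          subst hk
          rw [if_neg (show ¬ (n+1 ≤ n) by omega), if_pos (show n+1-1 ≤ n by omega)]
          constructor
          · rintro x ⟨a, ha, rfl⟩; exact a.2
          · rintro x ⟨a, ha, rfl⟩
            obtain ⟨y, hyX, hyadj, hypriv⟩ := hXmc a ha
            refine ⟨y.1, y.2, ?_, hyadj, ?_⟩
            · rintro ⟨a', ha', hval⟩
              exact hyX (Subtype.ext hval ▸ ha')
            · rintro x' ⟨a', ha', rfl⟩ hadj'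
              have ha'a : a' = a := hypriv a' ha' hadj'
              rw [ha'a]
      · beta_reduce
        rw [if_neg (show ¬ (n+1 ≤ n) by omega)]
        have hiso := iso_chromaticNumber_eq
          (embInduceIso (SimpleGraph.Embedding.induce (G := G) (S n)) X)
        rw [himg] at hiso
        rw [← hiso]
        exact hXχ
  obtain ⟨S, hlinks, hSχ⟩ := chain N le_rfl
  have hne : (S N).Nonempty := by
    rw [Set.nonempty_iff_ne_empty]
    intro hemp
    have hie : IsEmpty ↥(S N) := Set.isEmpty_coe_sort.2 hemp
    rw [SimpleGraph.chromaticNumber_eq_zero_of_isEmpty] at hSχ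
    have hb0 : b (N - N) = 0 := by
      have h9 : N - N = 0 := by omega
      rw [h9]
      rfl
    rw [hb0] at hSχ
    simp at hSχ
  obtain ⟨h0, hh0⟩ := hne
  obtain ⟨emb⟩ := embed_of_chain G δ S (fun k h1 h2 => (hlinks k h1 h2).1)
    (fun k h1 h2 => (hlinks k h1 h2).2) h0 hh0
  exact (hgood V G hG).1.false emb
end

section
/- Let G satisfy conditions (i)–(v), and let Y be a (ζ,β)-core in G. Then there are at most ατ·2^{βζ} vertices of G that are dense to Y. -/
/-- if G satisfies (i)–(v) and Y is a (ζ,β)-core in G (with parts `A`), then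
there are at most α·τ·2^(βζ) vertices of G dense to Y. -/
theorem statement6 (τ α δ β ζ : ℕ) (hα : 1 ≤ α) (hδ : 1 ≤ δ) (hβ : 2 ≤ β)
    (θ : ℕ → ℕ) (hθ : Monotone θ)
    (V : Type) (G : SimpleGraph V) (hG : Conditions τ α δ β θ G)
    (A : Fin β → Set V) (hA : IsCoreParts G ζ A) :
    {v : V | DenseTo G α A v}.encard ≤ ((α * τ * 2 ^ (β * ζ) : ℕ) : ℕ∞) := by
  classical
  obtain ⟨hT, hChi, hMatch, hCoreEx, hNoCore⟩ := hG
  by_contra hcon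
  push_neg at hcon
  set N := α * τ * 2 ^ (β * ζ) with hN
  have hAfin : ∀ i, (A i).Finite := fun i => Set.finite_of_encard_eq_coe (hA.1 i)
  set Yfin : Finset V := Finset.univ.biUnion (fun i => (hAfin i).toFinset) with hYfin
  have hYmem : ∀ y, y ∈ Yfin ↔ ∃ i, y ∈ A i := by
    intro y
    simp [hYfin, Set.Finite.mem_toFinset]
  have hYcard : Yfin.card ≤ β * ζ := by
    calc Yfin.card ≤ ∑ i : Fin β, (hAfin i).toFinset.card := Finset.card_biUnion_le
    _ = ∑ _i : Fin β, ζ := by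
        refine Finset.sum_congr rfl fun i _ => ?_
        have h := hA.1 i
        rw [Set.Finite.encard_eq_coe_toFinset_card (hAfin i)] at h
        exact_mod_cast h
    _ = β * ζ := by simp [Finset.sum_const, mul_comm]
  obtain ⟨Dset, hDsub, hDcard⟩ :
      ∃ t, t ⊆ {v : V | DenseTo G α A v} ∧ t.encard = ((N + 1 : ℕ) : ℕ∞) := by
    apply Set.exists_subset_encard_eq
    rw [Nat.cast_add, Nat.cast_one]
    exact Order.add_one_le_of_lt hcon
  have hDfin : Dset.Finite := Set.finite_of_encard_eq_coe hDcard
  set Dfin := hDfin.toFinset with hDfindef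
  have hDfincard : Dfin.card = N + 1 := by
    have h := hDcard
    rw [Set.Finite.encard_eq_coe_toFinset_card hDfin] at h
    exact_mod_cast h
  set f : V → Finset V := fun v => Yfin.filter (fun y => G.Adj v y) with hf
  have hmaps : ∀ v ∈ Dfin, f v ∈ Yfin.powerset := fun v _ =>
    Finset.mem_powerset.2 (Finset.filter_subset _ _)
  have hlt : Yfin.powerset.card * (α * τ) < Dfin.card := by
    rw [hDfincard, Finset.card_powerset]
    calc 2 ^ Yfin.card * (α * τ) ≤ 2 ^ (β * ζ) * (α * τ) :=
          Nat.mul_le_mul_right _ (Nat.pow_le_pow_right (by norm_num) hYcard)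
    _ = N := by rw [hN]; ring
    _ < N + 1 := Nat.lt_succ_self N
  obtain ⟨t0, _ht0, hfib⟩ := Finset.exists_lt_card_fiber_of_mul_lt_card_of_maps_to hmaps hlt
  set X := Dfin.filter (fun v => f v = t0) with hXdef
  have hXD : ∀ v ∈ X, DenseTo G α A v := fun v hv =>
    hDsub (hDfin.mem_toFinset.1 (Finset.mem_filter.1 hv).1)
  have hXf : ∀ v ∈ X, f v = t0 := fun v hv => (Finset.mem_filter.1 hv).2
  have hXcard : α * τ < X.card := hfib
  have hXne : X.Nonempty := Finset.card_pos.1 (lt_of_le_of_lt (Nat.zero_le _) hfib)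
  obtain ⟨v0, hv0⟩ := hXne
  -- a common neighbour y0 ∈ t0
  have hone : (0 : ℕ∞) < 1 := by norm_num
  have hα' : (1 : ℕ∞) ≤ (α : ℕ∞) := by exact_mod_cast hα
  set i0 : Fin β := ⟨0, by omega⟩ with hi0
  have hne0 : (A i0 ∩ G.neighborSet v0).Nonempty := by
    rw [← Set.encard_pos]
    exact lt_of_lt_of_le (lt_of_lt_of_le hone hα') ((hXD v0 hv0).2 i0)
  obtain ⟨y0, hy0A, hy0adj⟩ := hne0
  have hy0adj' : G.Adj v0 y0 := hy0adj
  have hy0t : y0 ∈ t0 := by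
    rw [← hXf v0 hv0]
    exact Finset.mem_filter.2 ⟨(hYmem y0).2 ⟨i0, hy0A⟩, hy0adj'⟩
  have hadjall : ∀ v ∈ X, G.Adj v y0 := by
    intro v hv
    have h := hXf v hv
    rw [← h] at hy0t
    exact (Finset.mem_filter.1 hy0t).2
  have hball : ∀ v ∈ X, v ∈ Ball2 G y0 := fun v hv => Or.inr (Or.inl (hadjall v hv).symm)
  -- get a coloring of the ball with τ colors
  have hcol : (G.induce (Ball2 G y0)).Colorable τ :=
    (SimpleGraph.chromaticNumber_le_iff_colorable).1 (hChi y0)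
  obtain ⟨C⟩ := hcol
  have hy0ball : y0 ∈ Ball2 G y0 := Or.inl rfl
  have hτpos : 0 < τ := by
    rcases Nat.eq_zero_or_pos τ with h | h
    · subst h; exact (C ⟨y0, hy0ball⟩).elim0
    · exact h
  set g : V → Fin τ := fun v => if h : v ∈ Ball2 G y0 then C ⟨v, h⟩ else ⟨0, hτpos⟩ with hg
  have hmaps2 : ∀ v ∈ X, g v ∈ (Finset.univ : Finset (Fin τ)) := fun v _ => Finset.mem_univ _
  have hlt2 : (Finset.univ : Finset (Fin τ)).card * α < X.card := by
    rw [Finset.card_univ, Fintype.card_fin, mul_comm]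
    exact hXcard
  obtain ⟨c, _, hc⟩ := Finset.exists_lt_card_fiber_of_mul_lt_card_of_maps_to hmaps2 hlt2
  obtain ⟨S, hSsub, hScard⟩ := Finset.exists_subset_card_eq hc.le
  have hSX : ∀ x ∈ S, x ∈ X := fun x hx => Finset.filter_subset _ _ (hSsub hx)
  have hSc : ∀ x ∈ S, g x = c := fun x hx => (Finset.mem_filter.1 (hSsub hx)).2
  have hSstable : ∀ x ∈ S, ∀ y ∈ S, ¬ G.Adj x y := by
    intro x hx y hy hadj
    have hxb := hball x (hSX x hx)
    have hyb := hball y (hSX y hy)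
    have h1 := hSc x hx
    have h2 := hSc y hy
    rw [hg] at h1 h2
    simp only [dif_pos hxb] at h1
    simp only [dif_pos hyb] at h2
    exact C.valid (show (G.induce (Ball2 G y0)).Adj ⟨x, hxb⟩ ⟨y, hyb⟩ from hadj)
      (h1.trans h2.symm)
  -- choose α common neighbours in each part
  have hTi : ∀ i : Fin β, (α : ℕ∞) ≤ ((↑t0 : Set V) ∩ A i).encard := by
    intro i
    refine le_trans ((hXD v0 hv0).2 i) (Set.encard_mono ?_)
    rintro y ⟨hyA, hyN⟩
    refine ⟨?_, hyA⟩
    have : y ∈ f v0 := Finset.mem_filter.2 ⟨(hYmem y).2 ⟨i, hyA⟩, hyN⟩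
    rw [hXf v0 hv0] at this
    exact this
  choose Si hSisub hSicard using fun i => Set.exists_subset_encard_eq (hTi i)
  have hSiA : ∀ i, Si i ⊆ A i := fun i => (hSisub i).trans Set.inter_subset_right
  have hSit0 : ∀ i, Si i ⊆ (↑t0 : Set V) := fun i => (hSisub i).trans Set.inter_subset_left
  have hadjSi : ∀ v ∈ X, ∀ i, ∀ y ∈ Si i, G.Adj v y := by
    intro v hv i y hy
    have hyt : y ∈ t0 := hSit0 i hy
    rw [← hXf v hv] at hyt
    exact (Finset.mem_filter.1 hyt).2
  have hXnotY : ∀ v ∈ X, ∀ i, v ∉ A i := by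
    intro v hv i hvA
    exact (hXD v hv).1 (Set.mem_iUnion.2 ⟨i, hvA⟩)
  -- build the (α, β+1)-core
  apply hNoCore
  refine ⟨Fin.snoc Si ((↑S : Set V)), ?_, ?_, ?_, ?_⟩
  · intro i
    cases i using Fin.lastCases with
    | last => rw [Fin.snoc_last, Set.encard_coe_eq_coe_finsetCard, hScard]
    | cast j => rw [Fin.snoc_castSucc]; exact hSicard j
  · intro i j hij
    cases i using Fin.lastCases with
    | last =>
      cases j using Fin.lastCases with
      | last => exact absurd rfl hij
      | cast j =>
        rw [Fin.snoc_last, Fin.snoc_castSucc]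
        rw [Set.disjoint_left]
        intro x hx hx'
        exact hXnotY x (hSX x hx) j (hSiA j hx')
    | cast i =>
      cases j using Fin.lastCases with
      | last =>
        rw [Fin.snoc_last, Fin.snoc_castSucc]
        rw [Set.disjoint_right]
        intro x hx hx'
        exact hXnotY x (hSX x hx) i (hSiA i hx')
      | cast j =>
        rw [Fin.snoc_castSucc, Fin.snoc_castSucc]
        have hij' : i ≠ j := fun h => hij (by rw [h])
        exact Set.disjoint_of_subset (hSiA i) (hSiA j) (hA.2.1 i j hij')
  · intro i
    cases i using Fin.lastCases with
    | last =>
      rw [Fin.snoc_last]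
      intro x hx y hy
      exact hSstable x hx y hy
    | cast i =>
      rw [Fin.snoc_castSucc]
      intro x hx y hy
      exact hA.2.2.1 i x (hSiA i hx) y (hSiA i hy)
  · intro i j hij
    cases i using Fin.lastCases with
    | last =>
      cases j using Fin.lastCases with
      | last => exact absurd rfl hij
      | cast j =>
        rw [Fin.snoc_last, Fin.snoc_castSucc]
        intro x hx y hy
        exact hadjSi x (hSX x hx) j y hy
    | cast i =>
      cases j using Fin.lastCases with
      | last =>
        rw [Fin.snoc_last, Fin.snoc_castSucc]
        intro x hx y hy
        exact (hadjSi y (hSX y hy) i x hx).symm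
      | cast j =>
        rw [Fin.snoc_castSucc, Fin.snoc_castSucc]
        have hij' : i ≠ j := fun h => hij (by rw [h])
        intro x hx y hy
        exact hA.2.2.2 i j hij' x (hSiA i hx) y (hSiA j hy)
end

section
/- Let η ≥ 1 and ζ ≥ max(η+δ, α) be integers, and let G satisfy conditions (i)–(v). Let 𝒯 be a 1-cleaned (ζ,η)-template array in G with sequence (Y_i,H_i) (1 ≤ i ≤ n). Then for each v ∈ V(𝒯) there are at most 2δ values of i ∈ {1,…,n} such that v has a neighbour in Y_i. -/

lemma exists_inj_of_le_encard {X : Type} : ∀ (n : ℕ) (s : Set X), (n:ℕ∞) ≤ s.encard →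
    ∃ f : Fin n → X, Function.Injective f ∧ ∀ m, f m ∈ s := by
  intro n
  induction n with
  | zero => intro s _; exact ⟨Fin.elim0, fun a => a.elim0, fun a => a.elim0⟩
  | succ k ih =>
    intro s hs
    have hne : s.Nonempty := by
      rw [← Set.one_le_encard_iff_nonempty]
      calc (1:ℕ∞) ≤ (k+1 : ℕ) := by exact_mod_cast Nat.succ_le_succ (Nat.zero_le k)
        _ ≤ s.encard := hs
    obtain ⟨x, hx⟩ := hne
    have hd : (k:ℕ∞) ≤ (s \ {x}).encard := by
      have h1 : (s \ {x}).encard + 1 = s.encard := Set.encard_diff_singleton_add_one hx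
      have : (k:ℕ∞) + 1 ≤ (s \ {x}).encard + 1 := by
        rw [h1]; exact_mod_cast hs
      exact (ENat.add_le_add_iff_right (by simp)).mp this
    obtain ⟨f, finj, hf⟩ := ih (s \ {x}) hd
    refine ⟨Fin.cases x f, ?_, ?_⟩
    · intro a b hab
      induction a using Fin.cases with
      | zero =>
        induction b using Fin.cases with
        | zero => rfl
        | succ b => simp at hab; exact absurd hab.symm (by have := hf b; intro h; exact this.2 (by simp [h]))
      | succ a =>
        induction b using Fin.cases with
        | zero => simp at hab; exact absurd hab (by have := hf a; intro h; exact this.2 (by simp [h]))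
        | succ b => simp at hab; exact congrArg Fin.succ (finj hab)
    · intro m
      induction m using Fin.cases with
      | zero => simpa using hx
      | succ a => simpa using (hf a).1

/-- The data of one broom rooted near `v`, inside the set `S`. -/
structure Broom {V : Type} (G : SimpleGraph V) (v : V) (δ : ℕ) (S : Set V) where
  y : V
  z : V
  L1 : Fin δ → V
  L2 : Fin δ → V
  hy : y ∈ S
  hz : z ∈ S
  hL1 : ∀ m, L1 m ∈ S
  hL2 : ∀ m, L2 m ∈ S
  adj_vy : G.Adj v y
  nadj_vz : ¬ G.Adj v z
  nadj_vL1 : ∀ m, ¬ G.Adj v (L1 m)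
  nadj_vL2 : ∀ m, ¬ G.Adj v (L2 m)
  adj_yz : G.Adj y z
  adj_yL1 : ∀ m, G.Adj y (L1 m)
  nadj_yL2 : ∀ m, ¬ G.Adj y (L2 m)
  adj_zL2 : ∀ m, G.Adj z (L2 m)
  nadj_L1 : ∀ m m', ¬ G.Adj (L1 m) (L1 m')
  nadj_L2 : ∀ m m', ¬ G.Adj (L2 m) (L2 m')
  inj_L1 : Function.Injective L1
  inj_L2 : Function.Injective L2

lemma broom_exists {V : Type} {G : SimpleGraph V} {v : V} {β ζ η δ : ℕ}
    (hδ : 1 ≤ δ) (hβ : 2 ≤ β) (hζ : η + δ ≤ ζ) {A : Fin β → Set V}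
    (hcore : IsCoreParts G ζ A)
    (hy0 : ∃ y ∈ ⋃ k, A k, G.Adj v y)
    (hsmall : ∀ k, (A k ∩ G.neighborSet v).encard + 1 ≤ (η : ℕ∞)) :
    Nonempty (Broom G v δ (⋃ k, A k)) := by
  obtain ⟨y, hyU, hvy⟩ := hy0
  obtain ⟨_, ⟨k, rfl⟩, hyk⟩ := hyU
  obtain ⟨Asz, Adisj, Astab, Acomp⟩ := hcore
  -- a part different from k
  have h0 : (0:ℕ) < β := by omega
  have h1 : (1:ℕ) < β := by omega
  set l : Fin β := if k = ⟨0, h0⟩ then ⟨1, h1⟩ else ⟨0, h0⟩ with hl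
  have hkl : k ≠ l := by
    by_cases h : k = ⟨0, h0⟩ <;> simp [hl, h] <;> simp [h] <;> intro hc <;> simp_all [Fin.ext_iff]
  -- each part minus N(v) has ≥ δ elements
  have hbig : ∀ p : Fin β, (δ : ℕ∞) ≤ (A p \ G.neighborSet v).encard := by
    intro p
    have he : (A p \ G.neighborSet v).encard + (A p ∩ G.neighborSet v).encard = (ζ:ℕ∞) := by
      rw [Set.encard_diff_add_encard_inter]; exact Asz p
    have hfin : (A p ∩ G.neighborSet v).encard ≠ ⊤ := by
      intro hc
      have := hsmall p; rw [hc] at this; simp at this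
    have : (δ : ℕ∞) + (A p ∩ G.neighborSet v).encard + 1
        ≤ (A p \ G.neighborSet v).encard + (A p ∩ G.neighborSet v).encard := by
      rw [he]
      calc (δ : ℕ∞) + (A p ∩ G.neighborSet v).encard + 1
          = (δ:ℕ∞) + ((A p ∩ G.neighborSet v).encard + 1) := by ring
        _ ≤ (δ:ℕ∞) + η := add_le_add_right (hsmall p) _
        _ ≤ (ζ:ℕ∞) := by exact_mod_cast (by omega : δ + η ≤ ζ)
    have h2 : (δ : ℕ∞) + (A p ∩ G.neighborSet v).encard
        ≤ (A p \ G.neighborSet v).encard + (A p ∩ G.neighborSet v).encard :=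
      le_trans (by simp [le_add_right]) this
    exact (WithTop.add_le_add_iff_right hfin).mp h2
  obtain ⟨L1, L1inj, hL1⟩ := exists_inj_of_le_encard δ (A l \ G.neighborSet v) (hbig l)
  obtain ⟨L2, L2inj, hL2⟩ := exists_inj_of_le_encard δ (A k \ G.neighborSet v) (hbig k)
  set z := L1 ⟨0, hδ⟩ with hz
  refine ⟨⟨y, z, L1, L2, ?_, ?_, ?_, ?_, hvy, ?_, ?_, ?_, ?_, ?_, ?_, ?_, ?_, ?_, L1inj, L2inj⟩⟩
  · exact Set.mem_iUnion.2 ⟨k, hyk⟩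
  · exact Set.mem_iUnion.2 ⟨l, (hL1 _).1⟩
  · exact fun m => Set.mem_iUnion.2 ⟨l, (hL1 m).1⟩
  · exact fun m => Set.mem_iUnion.2 ⟨k, (hL2 m).1⟩
  · exact (hL1 _).2
  · exact fun m => (hL1 m).2
  · exact fun m => (hL2 m).2
  · exact Acomp k l hkl y hyk _ (hL1 _).1
  · exact fun m => Acomp k l hkl y hyk _ (hL1 m).1
  · exact fun m => Astab k y hyk _ (hL2 m).1
  · exact fun m => Acomp l k hkl.symm z (hL1 _).1 _ (hL2 m).1
  · exact fun m m' => Astab l _ (hL1 m).1 _ (hL1 m').1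
  · exact fun m m' => Astab k _ (hL2 m).1 _ (hL2 m').1

def mkMap {V : Type} {δ : ℕ} (v : V) (yf zf : Fin (δ + δ) → V)
    (l1 l2 : Fin (δ + δ) → Fin δ → V) : TVert δ → V
  | .handle => v
  | .stem1 i => yf (Fin.castAdd δ i)
  | .leaf1 i m => l1 (Fin.castAdd δ i) m
  | .stem2 j => yf (Fin.natAdd δ j)
  | .end2 j => zf (Fin.natAdd δ j)
  | .leaf2 j m => l2 (Fin.natAdd δ j) m


/-- for η ≥ 1, ζ ≥ max(η+δ,α), G satisfying (i)–(v), and a 1-cleaned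
(ζ,η)-template array 𝒯 in G, each v ∈ V(𝒯) has a neighbour in Y_i for at most 2δ values
of i. -/
theorem statement9 (τ α δ β ζ η : ℕ) (hα : 1 ≤ α) (hδ : 1 ≤ δ) (hβ : 2 ≤ β)
    (θ : ℕ → ℕ) (hθ : Monotone θ) (hη : 1 ≤ η) (hζ : max (η + δ) α ≤ ζ)
    (V : Type) (G : SimpleGraph V) (hG : Conditions τ α δ β θ G)
    (n : ℕ) (T : TemplateArray G α β ζ η n) (hT : T.Cleaned1)
    (v : V) (hv : v ∈ T.Vall) :
    {i : Fin n | ∃ y ∈ T.Y i, G.Adj v y}.encard ≤ ((2 * δ : ℕ) : ℕ∞) := by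
  classical
  by_contra hcon
  push_neg at hcon
  set S := {i : Fin n | ∃ y ∈ T.Y i, G.Adj v y} with hSdef
  have hnotdense : ∀ i, ¬ DenseTo G α (T.A i) v := fun i => hT i v hv
  have small_of : ∀ i, ¬ MixedOn G α η (T.A i) v →
      ∀ k, (T.A i k ∩ G.neighborSet v).encard + 1 ≤ (η : ℕ∞) := by
    intro i hmix k
    by_contra hle
    refine hmix ⟨hnotdense i, k, ?_⟩
    rcases eq_or_ne ((T.A i k ∩ G.neighborSet v).encard) ⊤ with h | h
    · rw [h]; exact le_top
    · have hlt : (η : ℕ∞) < (T.A i k ∩ G.neighborSet v).encard + 1 := not_le.mp hle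
      lift (T.A i k ∩ G.neighborSet v).encard to ℕ using h with e he
      exact_mod_cast Nat.lt_succ_iff.mp (by exact_mod_cast hlt)
  -- choose an index to exclude
  have hSne : S.Nonempty := by
    rw [← Set.encard_pos]
    exact lt_of_le_of_lt zero_le hcon
  have hgoodset : ∃ j₀ : Fin n, ∀ i ∈ S \ {j₀}, v ∉ T.Y i ∧ ¬ MixedOn G α η (T.A i) v := by
    rcases hv with hvH | hvU
    · obtain ⟨_, ⟨j₀, rfl⟩, hj₀⟩ := hvH
      refine ⟨j₀, ?_⟩
      rintro i ⟨hiS, hine⟩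
      have hine' : i ≠ j₀ := by simpa using hine
      have hij : i < j₀ := by
        rcases lt_trichotomy i j₀ with h | h | h
        · exact h
        · exact absurd h hine'
        · obtain ⟨yy, hyy, hadj⟩ := hiS
          exact absurd hadj (T.no_edge j₀ i h v hj₀ yy hyy)
      refine ⟨fun hvY => ?_, T.not_mixed i j₀ hij v hj₀⟩
      exact Set.disjoint_left.mp (T.H_disj i j₀ (ne_of_lt hij)) (T.core_subset i hvY) hj₀
    · obtain ⟨j₀, _⟩ := hSne
      exact ⟨j₀, fun i _ => ⟨fun hvY => T.U_not_H v hvU i (T.core_subset i hvY),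
        T.U_not_mixed v hvU i⟩⟩
  obtain ⟨j₀, hgood⟩ := hgoodset
  have hcard : ((δ + δ : ℕ) : ℕ∞) ≤ (S \ {j₀}).encard := by
    have h1 : S.encard ≤ (S \ {j₀}).encard + 1 := by
      calc S.encard ≤ ((S \ {j₀}) ∪ {j₀}).encard := by
            refine Set.encard_le_encard (fun x hx => ?_)
            by_cases h : x = j₀
            · exact Or.inr (by simp [h])
            · exact Or.inl ⟨hx, by simp [h]⟩
        _ ≤ (S \ {j₀}).encard + ({j₀} : Set (Fin n)).encard := Set.encard_union_le _ _
        _ = (S \ {j₀}).encard + 1 := by rw [Set.encard_singleton]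
    have h2 : ((2 * δ : ℕ) : ℕ∞) + 1 ≤ (S \ {j₀}).encard + 1 :=
      le_trans (Order.add_one_le_of_lt hcon) h1
    have h3 : ((2 * δ : ℕ) : ℕ∞) ≤ (S \ {j₀}).encard :=
      (ENat.add_le_add_iff_right (by simp)).mp h2
    calc ((δ + δ : ℕ) : ℕ∞) = ((2 * δ : ℕ) : ℕ∞) := by norm_num [two_mul]
      _ ≤ _ := h3
  obtain ⟨f, finj, hfmem⟩ := exists_inj_of_le_encard (δ + δ) (S \ {j₀}) hcard
  have hfS : ∀ m, ∃ y ∈ T.Y (f m), G.Adj v y := fun m => (hfmem m).1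
  have hvnot : ∀ m, v ∉ T.Y (f m) := fun m => (hgood (f m) (hfmem m)).1
  have hsmall : ∀ m k, (T.A (f m) k ∩ G.neighborSet v).encard + 1 ≤ (η : ℕ∞) :=
    fun m => small_of (f m) (hgood (f m) (hfmem m)).2
  -- brooms
  have hB : ∀ m : Fin (δ + δ), Nonempty (Broom G v δ (T.Y (f m))) := fun m =>
    broom_exists hδ hβ (le_trans (le_max_left _ _) hζ) (T.core (f m)) (hfS m) (hsmall m)
  have B : ∀ m : Fin (δ + δ), Broom G v δ (T.Y (f m)) := fun m => (hB m).some
  -- cross-index facts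
  have cross : ∀ m m' : Fin (δ + δ), m ≠ m' →
      ∀ x ∈ T.Y (f m), ∀ x' ∈ T.Y (f m'), ¬ G.Adj x x' ∧ x ≠ x' := by
    intro m m' hmm x hx x' hx'
    have hne : f m ≠ f m' := fun h => hmm (finj h)
    have hxH : x ∈ T.Hs (f m) := T.core_subset (f m) hx
    have hx'H : x' ∈ T.Hs (f m') := T.core_subset (f m') hx'
    have hnex : x ≠ x' := by
      intro h; subst h
      exact Set.disjoint_left.mp (T.H_disj _ _ hne) hxH hx'H
    rcases lt_or_gt_of_ne hne with h | h
    · exact ⟨T.no_edge _ _ h x hxH x' hx', hnex⟩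
    · exact ⟨fun hadj => T.no_edge _ _ h x' hx'H x hx hadj.symm, hnex⟩
  have crossadj : ∀ {m m' : Fin (δ + δ)}, m ≠ m' → ∀ {x x'},
      x ∈ T.Y (f m) → x' ∈ T.Y (f m') → ¬ G.Adj x x' := by
    intro m m' hmm x x' hx hx'
    exact (cross _ _ hmm _ hx _ hx').1
  have crossne : ∀ {m m' : Fin (δ + δ)}, m ≠ m' → ∀ {x x'},
      x ∈ T.Y (f m) → x' ∈ T.Y (f m') → x ≠ x' := by
    intro m m' hmm x x' hx hx'
    exact (cross _ _ hmm _ hx _ hx').2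
  set c : Fin δ → Fin (δ + δ) := Fin.castAdd δ with hc
  set d : Fin δ → Fin (δ + δ) := Fin.natAdd δ with hd
  have cinj : Function.Injective c := Fin.castAdd_injective δ δ
  have dinj : Function.Injective d := by
    intro a b h
    have := congrArg Fin.val h
    simp [hd] at this
    exact Fin.ext this
  have cd : ∀ (i j : Fin δ), c i ≠ d j := by
    intro i j h
    have := congrArg Fin.val h
    simp [hc, hd] at this
    omega
  have dc : ∀ (j i : Fin δ), d j ≠ c i := fun j i h => cd i j h.symm
  have cne : ∀ {i i' : Fin δ}, i ≠ i' → c i ≠ c i' := fun h hcc => h (cinj hcc)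
  have dne : ∀ {j j' : Fin δ}, j ≠ j' → d j ≠ d j' := fun h hcc => h (dinj hcc)
  have vne : ∀ (m : Fin (δ + δ)) {x : V}, x ∈ T.Y (f m) → v ≠ x := by
    intro m x hx h
    exact hvnot m (h ▸ hx)
  -- the vertex map
  set F : TVert δ → V :=
    mkMap v (fun m => (B m).y) (fun m => (B m).z) (fun m => (B m).L1) (fun m => (B m).L2)
    with hF
  have hFinj : Function.Injective F := by
    intro a b hab
    cases a with
    | handle =>
      cases b with
      | handle => rfl
      | stem1 i => exact absurd hab (vne (c i) (B (c i)).hy)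
      | leaf1 i m => exact absurd hab (vne (c i) ((B (c i)).hL1 m))
      | stem2 j => exact absurd hab (vne (d j) (B (d j)).hy)
      | end2 j => exact absurd hab (vne (d j) (B (d j)).hz)
      | leaf2 j m => exact absurd hab (vne (d j) ((B (d j)).hL2 m))
    | stem1 i =>
      cases b with
      | handle => exact absurd hab.symm (vne (c i) (B (c i)).hy)
      | stem1 i' =>
        by_cases h : i = i'
        · rw [h]
        · exact absurd hab (crossne (cne h) (B (c i)).hy (B (c i')).hy)
      | leaf1 i' m =>
        by_cases h : i = i'
        · subst h; exact absurd hab ((B (c i)).adj_yL1 m).ne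
        · exact absurd hab (crossne (cne h) (B (c i)).hy ((B (c i')).hL1 m))
      | stem2 j => exact absurd hab (crossne (cd i j) (B (c i)).hy (B (d j)).hy)
      | end2 j => exact absurd hab (crossne (cd i j) (B (c i)).hy (B (d j)).hz)
      | leaf2 j m => exact absurd hab (crossne (cd i j) (B (c i)).hy ((B (d j)).hL2 m))
    | leaf1 i m =>
      cases b with
      | handle => exact absurd hab.symm (vne (c i) ((B (c i)).hL1 m))
      | stem1 i' =>
        by_cases h : i = i'
        · subst h; exact absurd hab.symm ((B (c i)).adj_yL1 m).ne
        · exact absurd hab (crossne (cne h) ((B (c i)).hL1 m) (B (c i')).hy)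
      | leaf1 i' m' =>
        by_cases h : i = i'
        · subst h
          rw [(B (c i)).inj_L1 hab]
        · exact absurd hab (crossne (cne h) ((B (c i)).hL1 m) ((B (c i')).hL1 m'))
      | stem2 j => exact absurd hab (crossne (cd i j) ((B (c i)).hL1 m) (B (d j)).hy)
      | end2 j => exact absurd hab (crossne (cd i j) ((B (c i)).hL1 m) (B (d j)).hz)
      | leaf2 j m' => exact absurd hab (crossne (cd i j) ((B (c i)).hL1 m) ((B (d j)).hL2 m'))
    | stem2 j =>
      cases b with
      | handle => exact absurd hab.symm (vne (d j) (B (d j)).hy)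
      | stem1 i => exact absurd hab (crossne (dc j i) (B (d j)).hy (B (c i)).hy)
      | leaf1 i m => exact absurd hab (crossne (dc j i) (B (d j)).hy ((B (c i)).hL1 m))
      | stem2 j' =>
        by_cases h : j = j'
        · rw [h]
        · exact absurd hab (crossne (dne h) (B (d j)).hy (B (d j')).hy)
      | end2 j' =>
        by_cases h : j = j'
        · subst h; exact absurd hab (B (d j)).adj_yz.ne
        · exact absurd hab (crossne (dne h) (B (d j)).hy (B (d j')).hz)
      | leaf2 j' m =>
        by_cases h : j = j'
        · subst h
          have hab' : (B (d j)).y = (B (d j)).L2 m := hab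
          exact absurd ((B (d j)).adj_vy) (fun hvy => (B (d j)).nadj_vL2 m (hab' ▸ hvy))
        · exact absurd hab (crossne (dne h) (B (d j)).hy ((B (d j')).hL2 m))
    | end2 j =>
      cases b with
      | handle => exact absurd hab.symm (vne (d j) (B (d j)).hz)
      | stem1 i => exact absurd hab (crossne (dc j i) (B (d j)).hz (B (c i)).hy)
      | leaf1 i m => exact absurd hab (crossne (dc j i) (B (d j)).hz ((B (c i)).hL1 m))
      | stem2 j' =>
        by_cases h : j = j'
        · subst h; exact absurd hab.symm (B (d j)).adj_yz.ne
        · exact absurd hab (crossne (dne h) (B (d j)).hz (B (d j')).hy)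
      | end2 j' =>
        by_cases h : j = j'
        · rw [h]
        · exact absurd hab (crossne (dne h) (B (d j)).hz (B (d j')).hz)
      | leaf2 j' m =>
        by_cases h : j = j'
        · subst h; exact absurd hab ((B (d j)).adj_zL2 m).ne
        · exact absurd hab (crossne (dne h) (B (d j)).hz ((B (d j')).hL2 m))
    | leaf2 j m =>
      cases b with
      | handle => exact absurd hab.symm (vne (d j) ((B (d j)).hL2 m))
      | stem1 i => exact absurd hab (crossne (dc j i) ((B (d j)).hL2 m) (B (c i)).hy)
      | leaf1 i m' => exact absurd hab (crossne (dc j i) ((B (d j)).hL2 m) ((B (c i)).hL1 m'))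
      | stem2 j' =>
        by_cases h : j = j'
        · subst h
          have hab' : (B (d j)).L2 m = (B (d j)).y := hab
          exact absurd ((B (d j)).adj_vy) (fun hvy => (B (d j)).nadj_vL2 m (hab'.symm ▸ hvy))
        · exact absurd hab (crossne (dne h) ((B (d j)).hL2 m) (B (d j')).hy)
      | end2 j' =>
        by_cases h : j = j'
        · subst h; exact absurd hab.symm ((B (d j)).adj_zL2 m).ne
        · exact absurd hab (crossne (dne h) ((B (d j)).hL2 m) (B (d j')).hz)
      | leaf2 j' m' =>
        by_cases h : j = j'
        · subst h
          rw [(B (d j)).inj_L2 hab]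
        · exact absurd hab (crossne (dne h) ((B (d j)).hL2 m) ((B (d j')).hL2 m'))
  have hrel : ∀ a b : TVert δ, G.Adj (F a) (F b) ↔ (TGraph δ).Adj a b := by
    intro a b
    cases a with
    | handle =>
      cases b with
      | handle => exact iff_of_false (G.irrefl) (by simp [TGraph])
      | stem1 i => exact iff_of_true (B (c i)).adj_vy (by simp [TGraph])
      | leaf1 i m => exact iff_of_false ((B (c i)).nadj_vL1 m) (by simp [TGraph])
      | stem2 j => exact iff_of_true (B (d j)).adj_vy (by simp [TGraph])
      | end2 j => exact iff_of_false ((B (d j)).nadj_vz) (by simp [TGraph])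
      | leaf2 j m => exact iff_of_false ((B (d j)).nadj_vL2 m) (by simp [TGraph])
    | stem1 i =>
      cases b with
      | handle => exact iff_of_true (B (c i)).adj_vy.symm (by simp [TGraph])
      | stem1 i' =>
        refine iff_of_false ?_ (by simp [TGraph])
        by_cases h : i = i'
        · subst h; exact G.irrefl
        · exact crossadj (cne h) (B (c i)).hy (B (c i')).hy
      | leaf1 i' m =>
        rw [show (TGraph δ).Adj (TVert.stem1 i) (TVert.leaf1 i' m) ↔ i' = i from by
          simp [TGraph, eq_comm]]
        constructor
        · intro h
          by_contra hne
          exact crossadj (cne (fun hx => hne (hx.symm))) (B (c i)).hy ((B (c i')).hL1 m) h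
        · rintro rfl; exact (B (c i')).adj_yL1 m
      | stem2 j =>
        exact iff_of_false (crossadj (cd i j) (B (c i)).hy (B (d j)).hy) (by simp [TGraph])
      | end2 j =>
        exact iff_of_false (crossadj (cd i j) (B (c i)).hy (B (d j)).hz) (by simp [TGraph])
      | leaf2 j m =>
        exact iff_of_false (crossadj (cd i j) (B (c i)).hy ((B (d j)).hL2 m)) (by simp [TGraph])
    | leaf1 i m =>
      cases b with
      | handle => exact iff_of_false (fun h => (B (c i)).nadj_vL1 m h.symm) (by simp [TGraph])
      | stem1 i' =>
        rw [show (TGraph δ).Adj (TVert.leaf1 i m) (TVert.stem1 i') ↔ i = i' from by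
          simp [TGraph, eq_comm]]
        constructor
        · intro h
          by_contra hne
          exact crossadj (cne hne) ((B (c i)).hL1 m) (B (c i')).hy h
        · rintro rfl; exact ((B (c i)).adj_yL1 m).symm
      | leaf1 i' m' =>
        refine iff_of_false ?_ (by simp [TGraph])
        by_cases h : i = i'
        · subst h; exact (B (c i)).nadj_L1 m m'
        · exact crossadj (cne h) ((B (c i)).hL1 m) ((B (c i')).hL1 m')
      | stem2 j =>
        exact iff_of_false (crossadj (cd i j) ((B (c i)).hL1 m) (B (d j)).hy) (by simp [TGraph])
      | end2 j =>
        exact iff_of_false (crossadj (cd i j) ((B (c i)).hL1 m) (B (d j)).hz) (by simp [TGraph])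
      | leaf2 j m' =>
        exact iff_of_false (crossadj (cd i j) ((B (c i)).hL1 m) ((B (d j)).hL2 m'))
          (by simp [TGraph])
    | stem2 j =>
      cases b with
      | handle => exact iff_of_true (B (d j)).adj_vy.symm (by simp [TGraph])
      | stem1 i =>
        exact iff_of_false (crossadj (dc j i) (B (d j)).hy (B (c i)).hy) (by simp [TGraph])
      | leaf1 i m =>
        exact iff_of_false (crossadj (dc j i) (B (d j)).hy ((B (c i)).hL1 m)) (by simp [TGraph])
      | stem2 j' =>
        refine iff_of_false ?_ (by simp [TGraph])
        by_cases h : j = j'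
        · subst h; exact G.irrefl
        · exact crossadj (dne h) (B (d j)).hy (B (d j')).hy
      | end2 j' =>
        rw [show (TGraph δ).Adj (TVert.stem2 j) (TVert.end2 j') ↔ j = j' from by
          simp [TGraph, eq_comm]]
        constructor
        · intro h
          by_contra hne
          exact crossadj (dne hne) (B (d j)).hy (B (d j')).hz h
        · rintro rfl; exact (B (d j)).adj_yz
      | leaf2 j' m =>
        refine iff_of_false ?_ (by simp [TGraph])
        by_cases h : j = j'
        · subst h; exact (B (d j)).nadj_yL2 m
        · exact crossadj (dne h) (B (d j)).hy ((B (d j')).hL2 m)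
    | end2 j =>
      cases b with
      | handle => exact iff_of_false (fun h => (B (d j)).nadj_vz h.symm) (by simp [TGraph])
      | stem1 i =>
        exact iff_of_false (crossadj (dc j i) (B (d j)).hz (B (c i)).hy) (by simp [TGraph])
      | leaf1 i m =>
        exact iff_of_false (crossadj (dc j i) (B (d j)).hz ((B (c i)).hL1 m)) (by simp [TGraph])
      | stem2 j' =>
        rw [show (TGraph δ).Adj (TVert.end2 j) (TVert.stem2 j') ↔ j = j' from by
          simp [TGraph, eq_comm]]
        constructor
        · intro h
          by_contra hne
          exact crossadj (dne hne) (B (d j)).hz (B (d j')).hy h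
        · rintro rfl; exact (B (d j)).adj_yz.symm
      | end2 j' =>
        refine iff_of_false ?_ (by simp [TGraph])
        by_cases h : j = j'
        · subst h; exact G.irrefl
        · exact crossadj (dne h) (B (d j)).hz (B (d j')).hz
      | leaf2 j' m =>
        rw [show (TGraph δ).Adj (TVert.end2 j) (TVert.leaf2 j' m) ↔ j' = j from by
          simp [TGraph, eq_comm]]
        constructor
        · intro h
          by_contra hne
          exact crossadj (dne (fun hx => hne hx.symm)) (B (d j)).hz ((B (d j')).hL2 m) h
        · rintro rfl; exact (B (d j')).adj_zL2 m
    | leaf2 j m =>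
      cases b with
      | handle => exact iff_of_false (fun h => (B (d j)).nadj_vL2 m h.symm) (by simp [TGraph])
      | stem1 i =>
        exact iff_of_false (crossadj (dc j i) ((B (d j)).hL2 m) (B (c i)).hy) (by simp [TGraph])
      | leaf1 i m' =>
        exact iff_of_false (crossadj (dc j i) ((B (d j)).hL2 m) ((B (c i)).hL1 m'))
          (by simp [TGraph])
      | stem2 j' =>
        refine iff_of_false ?_ (by simp [TGraph])
        by_cases h : j = j'
        · subst h; exact fun h' => (B (d j)).nadj_yL2 m h'.symm
        · exact crossadj (dne h) ((B (d j)).hL2 m) (B (d j')).hy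
      | end2 j' =>
        rw [show (TGraph δ).Adj (TVert.leaf2 j m) (TVert.end2 j') ↔ j = j' from by
          simp [TGraph, eq_comm]]
        constructor
        · intro h
          by_contra hne
          exact crossadj (dne hne) ((B (d j)).hL2 m) (B (d j')).hz h
        · rintro rfl; exact ((B (d j)).adj_zL2 m).symm
      | leaf2 j' m' =>
        refine iff_of_false ?_ (by simp [TGraph])
        by_cases h : j = j'
        · subst h; exact (B (d j)).nadj_L2 m m'
        · exact crossadj (dne h) ((B (d j)).hL2 m) ((B (d j')).hL2 m')
  exact hG.1.false ⟨⟨F, hFinj⟩, fun {a b} => hrel a b⟩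
end

section
/- Let η ≥ δ and ζ ≥ max(η,α)+δ be integers, let G satisfy conditions (i)–(v), and let 𝒯 be a 1-cleaned (ζ,η)-template array in G with sequence (Y_i,H_i) (1 ≤ i ≤ n). Then for each v ∈ V(𝒯) there are fewer than γ values of i ∈ {1,…,n} such that v has a neighbour in H_i, where γ = (2δτ+1)(2δ+1). -/
open Set SimpleGraph

namespace St10

variable {V : Type} {G : SimpleGraph V}

lemma build_T {δ : ℕ} (hfree : TdeltaFree δ G)
    (w : V) (s1 : Fin δ → V) (l1 : Fin δ → Fin δ → V)
    (s2 b2 : Fin δ → V) (l2 : Fin δ → Fin δ → V)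
    (D : Fin δ ⊕ Fin δ → Set V)
    (hDd : ∀ s s', s ≠ s' → Disjoint (D s) (D s'))
    (hwD : ∀ s, w ∉ D s)
    (m1 : ∀ t, s1 t ∈ D (Sum.inl t)) (m2 : ∀ t m, l1 t m ∈ D (Sum.inl t))
    (m3 : ∀ t, s2 t ∈ D (Sum.inr t)) (m4 : ∀ t, b2 t ∈ D (Sum.inr t))
    (m5 : ∀ t m, l2 t m ∈ D (Sum.inr t))
    (a1 : ∀ t, G.Adj w (s1 t)) (a2 : ∀ t, G.Adj w (s2 t))
    (a3 : ∀ t m, G.Adj (s1 t) (l1 t m))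
    (a4 : ∀ t, G.Adj (s2 t) (b2 t))
    (a5 : ∀ t m, G.Adj (b2 t) (l2 t m))
    (n1 : ∀ t m, ¬ G.Adj w (l1 t m)) (n2 : ∀ t, ¬ G.Adj w (b2 t))
    (n3 : ∀ t m, ¬ G.Adj w (l2 t m))
    (n4 : ∀ t m m', ¬ G.Adj (l1 t m) (l1 t m'))
    (n5 : ∀ t m, ¬ G.Adj (s2 t) (l2 t m))
    (n6 : ∀ t m m', ¬ G.Adj (l2 t m) (l2 t m'))
    (n7 : ∀ s s', s ≠ s' → ∀ x ∈ D s, ∀ y ∈ D s', ¬ G.Adj x y)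
    (i1 : ∀ t, Function.Injective (l1 t)) (i2 : ∀ t, Function.Injective (l2 t))
    (i4 : ∀ t m, s2 t ≠ l2 t m) :
    False := by
  classical
  set f : TVert δ → V := fun a => match a with
    | TVert.handle => w
    | TVert.stem1 t => s1 t
    | TVert.leaf1 t m => l1 t m
    | TVert.stem2 t => s2 t
    | TVert.end2 t => b2 t
    | TVert.leaf2 t m => l2 t m with hf
  have nIL : ∀ (i j : Fin δ), i ≠ j → (Sum.inl i : Fin δ ⊕ Fin δ) ≠ Sum.inl j :=
    fun i j h e => h (Sum.inl.inj e)
  have nIR : ∀ (i j : Fin δ), i ≠ j → (Sum.inr i : Fin δ ⊕ Fin δ) ≠ Sum.inr j :=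
    fun i j h e => h (Sum.inr.inj e)
  have nLR : ∀ (i j : Fin δ), (Sum.inl i : Fin δ ⊕ Fin δ) ≠ Sum.inr j := fun i j => by simp
  -- injectivity
  have inj : Function.Injective f := by
    have key : ∀ (p q : Fin δ ⊕ Fin δ) (x y : V), x ∈ D p → y ∈ D q → x = y → p = q := by
      intro p q x y hx hy e
      by_contra hne
      exact Set.disjoint_left.mp (hDd p q hne) hx (e ▸ hy)
    have keyw : ∀ (p : Fin δ ⊕ Fin δ) (x : V), x ∈ D p → x ≠ w := by
      intro p x hx e; exact hwD p (e ▸ hx)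
    intro a b hab
    cases a with
    | handle =>
      cases b with
      | handle => rfl
      | stem1 t => exact absurd hab.symm (keyw _ _ (m1 t))
      | leaf1 t m => exact absurd hab.symm (keyw _ _ (m2 t m))
      | stem2 t => exact absurd hab.symm (keyw _ _ (m3 t))
      | end2 t => exact absurd hab.symm (keyw _ _ (m4 t))
      | leaf2 t m => exact absurd hab.symm (keyw _ _ (m5 t m))
    | stem1 t =>
      cases b with
      | handle => exact absurd hab (keyw _ _ (m1 t))
      | stem1 t' =>
        have := key _ _ _ _ (m1 t) (m1 t') hab
        rw [Sum.inl.inj this]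
      | leaf1 t' m =>
        have ht : t = t' := Sum.inl.inj (key _ _ _ _ (m1 t) (m2 t' m) hab)
        subst ht; exact absurd hab (a3 t m).ne
      | stem2 t' => exact absurd (key _ _ _ _ (m1 t) (m3 t') hab) (nLR t t')
      | end2 t' => exact absurd (key _ _ _ _ (m1 t) (m4 t') hab) (nLR t t')
      | leaf2 t' m => exact absurd (key _ _ _ _ (m1 t) (m5 t' m) hab) (nLR t t')
    | leaf1 t m =>
      cases b with
      | handle => exact absurd hab (keyw _ _ (m2 t m))
      | stem1 t' =>
        have ht : t = t' := Sum.inl.inj (key _ _ _ _ (m2 t m) (m1 t') hab)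
        subst ht; exact absurd hab.symm (a3 t m).ne
      | leaf1 t' m' =>
        have ht : t = t' := Sum.inl.inj (key _ _ _ _ (m2 t m) (m2 t' m') hab)
        subst ht; rw [i1 t hab]
      | stem2 t' => exact absurd (key _ _ _ _ (m2 t m) (m3 t') hab) (nLR t t')
      | end2 t' => exact absurd (key _ _ _ _ (m2 t m) (m4 t') hab) (nLR t t')
      | leaf2 t' m' => exact absurd (key _ _ _ _ (m2 t m) (m5 t' m') hab) (nLR t t')
    | stem2 t =>
      cases b with
      | handle => exact absurd hab (keyw _ _ (m3 t))
      | stem1 t' => exact absurd (key _ _ _ _ (m3 t) (m1 t') hab).symm (nLR t' t)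
      | leaf1 t' m => exact absurd (key _ _ _ _ (m3 t) (m2 t' m) hab).symm (nLR t' t)
      | stem2 t' =>
        have := key _ _ _ _ (m3 t) (m3 t') hab
        rw [Sum.inr.inj this]
      | end2 t' =>
        have ht : t = t' := Sum.inr.inj (key _ _ _ _ (m3 t) (m4 t') hab)
        subst ht; exact absurd hab (a4 t).ne
      | leaf2 t' m =>
        have ht : t = t' := Sum.inr.inj (key _ _ _ _ (m3 t) (m5 t' m) hab)
        subst ht; exact absurd hab (i4 t m)
    | end2 t =>
      cases b with
      | handle => exact absurd hab (keyw _ _ (m4 t))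
      | stem1 t' => exact absurd (key _ _ _ _ (m4 t) (m1 t') hab).symm (nLR t' t)
      | leaf1 t' m => exact absurd (key _ _ _ _ (m4 t) (m2 t' m) hab).symm (nLR t' t)
      | stem2 t' =>
        have ht : t = t' := Sum.inr.inj (key _ _ _ _ (m4 t) (m3 t') hab)
        subst ht; exact absurd hab.symm (a4 t).ne
      | end2 t' =>
        have := key _ _ _ _ (m4 t) (m4 t') hab
        rw [Sum.inr.inj this]
      | leaf2 t' m =>
        have ht : t = t' := Sum.inr.inj (key _ _ _ _ (m4 t) (m5 t' m) hab)
        subst ht; exact absurd hab (a5 t m).ne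
    | leaf2 t m =>
      cases b with
      | handle => exact absurd hab (keyw _ _ (m5 t m))
      | stem1 t' => exact absurd (key _ _ _ _ (m5 t m) (m1 t') hab).symm (nLR t' t)
      | leaf1 t' m' => exact absurd (key _ _ _ _ (m5 t m) (m2 t' m') hab).symm (nLR t' t)
      | stem2 t' =>
        have ht : t = t' := Sum.inr.inj (key _ _ _ _ (m5 t m) (m3 t') hab)
        subst ht; exact absurd hab.symm (i4 t m)
      | end2 t' =>
        have ht : t = t' := Sum.inr.inj (key _ _ _ _ (m5 t m) (m4 t') hab)
        subst ht; exact absurd hab.symm (a5 t m).ne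
      | leaf2 t' m' =>
        have ht : t = t' := Sum.inr.inj (key _ _ _ _ (m5 t m) (m5 t' m') hab)
        subst ht; rw [i2 t hab]
  -- adjacency of TGraph on constructors
  have T1 : ∀ i, (TGraph δ).Adj TVert.handle (TVert.stem1 i) := by
    intro i; rw [TGraph, SimpleGraph.fromRel_adj]
    exact ⟨by simp, Or.inl (Or.inl ⟨i, rfl, rfl⟩)⟩
  have T2 : ∀ i, (TGraph δ).Adj TVert.handle (TVert.stem2 i) := by
    intro i; rw [TGraph, SimpleGraph.fromRel_adj]
    exact ⟨by simp, Or.inl (Or.inr (Or.inr (Or.inl ⟨i, rfl, rfl⟩)))⟩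
  have T3 : ∀ i m, (TGraph δ).Adj (TVert.stem1 i) (TVert.leaf1 i m) := by
    intro i m; rw [TGraph, SimpleGraph.fromRel_adj]
    exact ⟨by simp, Or.inl (Or.inr (Or.inl ⟨i, m, rfl, rfl⟩))⟩
  have T4 : ∀ i, (TGraph δ).Adj (TVert.stem2 i) (TVert.end2 i) := by
    intro i; rw [TGraph, SimpleGraph.fromRel_adj]
    exact ⟨by simp, Or.inl (Or.inr (Or.inr (Or.inr (Or.inl ⟨i, rfl, rfl⟩))))⟩
  have T5 : ∀ i m, (TGraph δ).Adj (TVert.end2 i) (TVert.leaf2 i m) := by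
    intro i m; rw [TGraph, SimpleGraph.fromRel_adj]
    exact ⟨by simp, Or.inl (Or.inr (Or.inr (Or.inr (Or.inr ⟨i, m, rfl, rfl⟩))))⟩
  have fwd : ∀ a b, (TGraph δ).Adj a b → G.Adj (f a) (f b) := by
    intro a b hab
    rw [TGraph, SimpleGraph.fromRel_adj] at hab
    obtain ⟨hne, hr | hr⟩ := hab
    · rcases hr with ⟨i, rfl, rfl⟩ | ⟨i, m, rfl, rfl⟩ | ⟨i, rfl, rfl⟩ | ⟨i, rfl, rfl⟩ |
        ⟨i, m, rfl, rfl⟩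
      exacts [a1 i, a3 i m, a2 i, a4 i, a5 i m]
    · rcases hr with ⟨i, rfl, rfl⟩ | ⟨i, m, rfl, rfl⟩ | ⟨i, rfl, rfl⟩ | ⟨i, rfl, rfl⟩ |
        ⟨i, m, rfl, rfl⟩
      exacts [(a1 i).symm, (a3 i m).symm, (a2 i).symm, (a4 i).symm, (a5 i m).symm]
  have bwd : ∀ a b, G.Adj (f a) (f b) → (TGraph δ).Adj a b := by
    intro a b h
    cases a with
    | handle =>
      cases b with
      | handle => exact absurd h (G.loopless.irrefl w)
      | stem1 i => exact T1 i
      | leaf1 i m => exact absurd h (n1 i m)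
      | stem2 i => exact T2 i
      | end2 i => exact absurd h (n2 i)
      | leaf2 i m => exact absurd h (n3 i m)
    | stem1 i =>
      cases b with
      | handle => exact (T1 i).symm
      | stem1 j =>
        by_cases hij : i = j
        · subst hij; exact absurd h (G.loopless.irrefl _)
        · exact absurd h (n7 _ _ (nIL i j hij) _ (m1 i) _ (m1 j))
      | leaf1 j m =>
        by_cases hij : i = j
        · subst hij; exact T3 i m
        · exact absurd h (n7 _ _ (nIL i j hij) _ (m1 i) _ (m2 j m))
      | stem2 j => exact absurd h (n7 _ _ (nLR i j) _ (m1 i) _ (m3 j))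
      | end2 j => exact absurd h (n7 _ _ (nLR i j) _ (m1 i) _ (m4 j))
      | leaf2 j m => exact absurd h (n7 _ _ (nLR i j) _ (m1 i) _ (m5 j m))
    | leaf1 i m =>
      cases b with
      | handle => exact absurd h.symm (n1 i m)
      | stem1 j =>
        by_cases hij : i = j
        · subst hij; exact (T3 i m).symm
        · exact absurd h (n7 _ _ (nIL i j hij) _ (m2 i m) _ (m1 j))
      | leaf1 j m' =>
        by_cases hij : i = j
        · subst hij; exact absurd h (n4 i m m')
        · exact absurd h (n7 _ _ (nIL i j hij) _ (m2 i m) _ (m2 j m'))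
      | stem2 j => exact absurd h (n7 _ _ (nLR i j) _ (m2 i m) _ (m3 j))
      | end2 j => exact absurd h (n7 _ _ (nLR i j) _ (m2 i m) _ (m4 j))
      | leaf2 j m' => exact absurd h (n7 _ _ (nLR i j) _ (m2 i m) _ (m5 j m'))
    | stem2 i =>
      cases b with
      | handle => exact (T2 i).symm
      | stem1 j => exact absurd h.symm (n7 _ _ (nLR j i) _ (m1 j) _ (m3 i))
      | leaf1 j m => exact absurd h.symm (n7 _ _ (nLR j i) _ (m2 j m) _ (m3 i))
      | stem2 j =>
        by_cases hij : i = j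
        · subst hij; exact absurd h (G.loopless.irrefl _)
        · exact absurd h (n7 _ _ (nIR i j hij) _ (m3 i) _ (m3 j))
      | end2 j =>
        by_cases hij : i = j
        · subst hij; exact T4 i
        · exact absurd h (n7 _ _ (nIR i j hij) _ (m3 i) _ (m4 j))
      | leaf2 j m =>
        by_cases hij : i = j
        · subst hij; exact absurd h (n5 i m)
        · exact absurd h (n7 _ _ (nIR i j hij) _ (m3 i) _ (m5 j m))
    | end2 i =>
      cases b with
      | handle => exact absurd h.symm (n2 i)
      | stem1 j => exact absurd h.symm (n7 _ _ (nLR j i) _ (m1 j) _ (m4 i))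
      | leaf1 j m => exact absurd h.symm (n7 _ _ (nLR j i) _ (m2 j m) _ (m4 i))
      | stem2 j =>
        by_cases hij : i = j
        · subst hij; exact (T4 i).symm
        · exact absurd h (n7 _ _ (nIR i j hij) _ (m4 i) _ (m3 j))
      | end2 j =>
        by_cases hij : i = j
        · subst hij; exact absurd h (G.loopless.irrefl _)
        · exact absurd h (n7 _ _ (nIR i j hij) _ (m4 i) _ (m4 j))
      | leaf2 j m =>
        by_cases hij : i = j
        · subst hij; exact T5 i m
        · exact absurd h (n7 _ _ (nIR i j hij) _ (m4 i) _ (m5 j m))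
    | leaf2 i m =>
      cases b with
      | handle => exact absurd h.symm (n3 i m)
      | stem1 j => exact absurd h.symm (n7 _ _ (nLR j i) _ (m1 j) _ (m5 i m))
      | leaf1 j m' => exact absurd h.symm (n7 _ _ (nLR j i) _ (m2 j m') _ (m5 i m))
      | stem2 j =>
        by_cases hij : i = j
        · subst hij; exact absurd h.symm (n5 i m)
        · exact absurd h (n7 _ _ (nIR i j hij) _ (m5 i m) _ (m3 j))
      | end2 j =>
        by_cases hij : i = j
        · subst hij; exact (T5 i m).symm
        · exact absurd h (n7 _ _ (nIR i j hij) _ (m5 i m) _ (m4 j))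
      | leaf2 j m' =>
        by_cases hij : i = j
        · subst hij; exact absurd h (n6 i m m')
        · exact absurd h (n7 _ _ (nIR i j hij) _ (m5 i m) _ (m5 j m'))
  exact hfree.elim ⟨⟨f, inj⟩, fun {a b} => ⟨fun h => bwd a b h, fun h => fwd a b h⟩⟩

end St10

namespace St10

variable {V : Type} {G : SimpleGraph V} {α β ζ η n : ℕ}


lemma enat_helper {x y : ℕ∞} {z e r : ℕ} (h : x + y = (z : ℕ∞)) (hy : y < (e : ℕ∞))
    (hr : r + e ≤ z + 1) : (r : ℕ∞) ≤ x := by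
  have hxt : x ≠ ⊤ := by
    intro hx; rw [hx] at h; simp [top_add] at h
  have hyt : y ≠ ⊤ := by
    intro hx; rw [hx] at h; simp [add_top] at h
  lift x to ℕ using hxt with a
  lift y to ℕ using hyt with b
  have h1 : a + b = z := by exact_mod_cast h
  have h2 : b < e := by exact_mod_cast hy
  have : r ≤ a := by omega
  exact_mod_cast this

lemma exists_fin_inj_of_encard {V : Type} {s : Set V} {d : ℕ} (h : (d : ℕ∞) ≤ s.encard) :
    ∃ f : Fin d → V, Function.Injective f ∧ ∀ m, f m ∈ s := by
  obtain ⟨t, hts, ht⟩ := Set.exists_subset_encard_eq h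
  have hfin : t.Finite := Set.finite_of_encard_eq_coe ht
  have hcard : hfin.toFinset.card = d := by
    have := hfin.encard_eq_coe_toFinset_card
    rw [ht] at this; exact_mod_cast this.symm
  refine ⟨fun m => (hfin.toFinset.equivFin.symm (Fin.cast hcard.symm m)).1, ?_, ?_⟩
  · intro a b hab
    have := hfin.toFinset.equivFin.symm.injective (Subtype.ext hab)
    simpa [Fin.ext_iff] using this
  · intro m
    have := (hfin.toFinset.equivFin.symm (Fin.cast hcard.symm m)).2
    rw [Set.Finite.mem_toFinset] at this
    exact hts this




lemma mem_Vall_of_Hs (T : TemplateArray G α β ζ η n) {i : Fin n} {x : V}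
    (hx : x ∈ T.Hs i) : x ∈ T.Vall :=
  Or.inl (Set.mem_iUnion.mpr ⟨i, hx⟩)

lemma PB (T : TemplateArray G α β ζ η n) (hT : T.Cleaned1) (hη1 : 1 ≤ η)
    (w : V) (hw : w ∈ T.Vall) (i : Fin n) (hwi : w ∉ T.Hs i) (k : Fin β) :
    (T.A i k ∩ G.neighborSet w).encard < (η : ℕ∞) := by
  have hnd : ¬ DenseTo G α (T.A i) w := hT i w hw
  have hmix : ¬ MixedOn G α η (T.A i) w →
      (T.A i k ∩ G.neighborSet w).encard < (η : ℕ∞) := by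
    intro hm
    by_contra hk
    exact hm ⟨hnd, k, not_lt.mp hk⟩
  rcases hw with hwH | hwU
  · obtain ⟨j, hj⟩ := Set.mem_iUnion.mp hwH
    have hij : i ≠ j := fun e => hwi (e ▸ hj)
    rcases lt_or_gt_of_ne hij with hlt | hgt
    · exact hmix (T.not_mixed i j hlt w hj)
    · have hempty : T.A i k ∩ G.neighborSet w = ∅ := by
        ext x
        simp only [Set.mem_inter_iff, Set.mem_empty_iff_false, iff_false, not_and]
        intro hx hnx
        exact T.no_edge j i hgt w hj x (Set.mem_iUnion.mpr ⟨k, hx⟩) hnx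
      rw [hempty, Set.encard_empty]
      exact_mod_cast Nat.pos_of_ne_zero (by omega)
  · exact hmix (T.U_not_mixed w hwU i)

lemma YY (T : TemplateArray G α β ζ η n) {i j : Fin n} (hij : i ≠ j) {x y : V}
    (hx : x ∈ T.Y i) (hy : y ∈ T.Y j) : ¬ G.Adj x y := by
  rcases lt_or_gt_of_ne hij with h | h
  · exact T.no_edge i j h x (T.core_subset i hx) y hy
  · intro ha
    exact T.no_edge j i h y (T.core_subset j hy) x hx ha.symm

lemma exists_other {β : ℕ} (hβ : 2 ≤ β) (κ : Fin β) : ∃ r : Fin β, r ≠ κ := by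
  by_cases h : κ = ⟨0, by omega⟩
  · exact ⟨⟨1, by omega⟩, by simp [h, Fin.ext_iff]⟩
  · exact ⟨⟨0, by omega⟩, fun e => h e.symm⟩

lemma broomA1 {δ : ℕ} (A : Fin β → Set V) (hcore : IsCoreParts G ζ A) (hβ : 2 ≤ β)
    (hζ : η + δ ≤ ζ) (w y : V) {κ : Fin β} (hκ : y ∈ A κ)
    (hbd : ∀ k, (A k ∩ G.neighborSet w).encard < (η : ℕ∞)) :
    ∃ l : Fin δ → V, (∀ m, l m ∈ ⋃ k, A k) ∧ Function.Injective l ∧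
      (∀ m, G.Adj y (l m)) ∧ (∀ m, ¬ G.Adj w (l m)) ∧
      (∀ m m', ¬ G.Adj (l m) (l m')) := by
  obtain ⟨hsize, hdis, hstab, hcomp⟩ := hcore
  obtain ⟨r, hr⟩ := exists_other hβ κ
  have hpool : (δ : ℕ∞) ≤ (A r \ G.neighborSet w).encard := by
    exact enat_helper ((Set.encard_diff_add_encard_inter _ _).trans (hsize r)) (hbd r) (by omega)
  obtain ⟨l, hlinj, hl⟩ := exists_fin_inj_of_encard hpool
  refine ⟨l, fun m => Set.mem_iUnion.mpr ⟨r, (hl m).1⟩, hlinj,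
    fun m => hcomp κ r (Ne.symm hr) y hκ (l m) (hl m).1,
    fun m => (hl m).2, fun m m' => hstab r (l m) (hl m).1 (l m') (hl m').1⟩

lemma broomA2 {δ : ℕ} (A : Fin β → Set V) (hcore : IsCoreParts G ζ A) (hβ : 2 ≤ β)
    (hζ : η + δ ≤ ζ) (hη1 : 1 ≤ η) (w y : V) {κ : Fin β} (hκ : y ∈ A κ)
    (hbd : ∀ k, (A k ∩ G.neighborSet w).encard < (η : ℕ∞)) :
    ∃ b, ∃ l : Fin δ → V,
      (b ∈ ⋃ k, A k) ∧ G.Adj y b ∧ ¬ G.Adj w b ∧ y ≠ b ∧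
      (∀ m, l m ∈ ⋃ k, A k) ∧ Function.Injective l ∧
      (∀ m, G.Adj b (l m)) ∧ (∀ m, ¬ G.Adj y (l m)) ∧ (∀ m, y ≠ l m) ∧
      (∀ m, b ≠ l m) ∧ (∀ m, ¬ G.Adj w (l m)) ∧
      (∀ m m', ¬ G.Adj (l m) (l m')) := by
  obtain ⟨hsize, hdis, hstab, hcomp⟩ := hcore
  obtain ⟨r, hr⟩ := exists_other hβ κ
  have hpoolb : (1 : ℕ∞) ≤ (A r \ G.neighborSet w).encard := by
    exact enat_helper ((Set.encard_diff_add_encard_inter _ _).trans (hsize r)) (hbd r) (by omega)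
  obtain ⟨b, hb⟩ := Set.one_le_encard_iff_nonempty.mp hpoolb
  have hsmall : (A κ ∩ (G.neighborSet w ∪ {y})).encard < ((η + 1 : ℕ) : ℕ∞) := by
    have h1 : A κ ∩ (G.neighborSet w ∪ {y}) ⊆ (A κ ∩ G.neighborSet w) ∪ {y} := by
      intro x hx
      rcases hx.2 with h | h
      · exact Or.inl ⟨hx.1, h⟩
      · exact Or.inr h
    calc (A κ ∩ (G.neighborSet w ∪ {y})).encard
        ≤ ((A κ ∩ G.neighborSet w) ∪ {y}).encard := Set.encard_le_encard h1
      _ ≤ (A κ ∩ G.neighborSet w).encard + 1 := by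
          refine (Set.encard_union_le _ _).trans ?_
          simp [Set.encard_singleton]
      _ < ((η + 1 : ℕ) : ℕ∞) := by
          have := hbd κ
          have hfin : (A κ ∩ G.neighborSet w).encard ≠ ⊤ :=
            fun e => by rw [e] at this; exact (not_top_lt this)
          lift (A κ ∩ G.neighborSet w).encard to ℕ using hfin with a
          have : a < η := by exact_mod_cast this
          exact_mod_cast Nat.add_lt_add_right this 1
  have hpooll : (δ : ℕ∞) ≤ (A κ \ (G.neighborSet w ∪ {y})).encard := by
    exact enat_helper ((Set.encard_diff_add_encard_inter _ _).trans (hsize κ)) hsmall (by omega)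
  obtain ⟨l, hlinj, hl⟩ := exists_fin_inj_of_encard hpooll
  have hbne : y ≠ b := by
    intro e
    exact Set.disjoint_left.mp (hdis r κ hr) hb.1 (e ▸ hκ)
  refine ⟨b, l, Set.mem_iUnion.mpr ⟨r, hb.1⟩,
    hcomp κ r (Ne.symm hr) y hκ b hb.1, hb.2, hbne,
    fun m => Set.mem_iUnion.mpr ⟨κ, (hl m).1⟩, hlinj,
    fun m => hcomp r κ hr b hb.1 (l m) (hl m).1,
    fun m => hstab κ y hκ (l m) (hl m).1,
    fun m e => (hl m).2 (Or.inr (by simp [← e])),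
    fun m => (hcomp r κ hr b hb.1 (l m) (hl m).1).ne,
    fun m => fun h => (hl m).2 (Or.inl h),
    fun m m' => hstab κ (l m) (hl m).1 (l m') (hl m').1⟩

lemma broomB2 {δ : ℕ} (A : Fin β → Set V) (hcore : IsCoreParts G ζ A) (hβ : 2 ≤ β)
    (hζα : α + δ ≤ ζ) (hδζ : δ ≤ ζ) (hη1 : 1 ≤ η)
    (h : V) (hnotY : h ∉ ⋃ k, A k)
    {k : Fin β} (hmixk : (η : ℕ∞) ≤ (A k ∩ G.neighborSet h).encard)
    (hnd : ¬ DenseTo G α A h) :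
    ∃ b, ∃ l : Fin δ → V, (b ∈ ⋃ k', A k') ∧ G.Adj h b ∧
      (∀ m, l m ∈ ⋃ k', A k') ∧ Function.Injective l ∧
      (∀ m, G.Adj b (l m)) ∧ (∀ m, ¬ G.Adj h (l m)) ∧ (∀ m, b ≠ l m) ∧
      (∀ m, h ≠ l m) ∧ (∀ m m', ¬ G.Adj (l m) (l m')) := by
  obtain ⟨hsize, hdis, hstab, hcomp⟩ := hcore
  have hne : (A k ∩ G.neighborSet h).Nonempty := by
    rw [← Set.one_le_encard_iff_nonempty]
    exact le_trans (by exact_mod_cast hη1) hmixk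
  obtain ⟨p, hp⟩ : ∃ p, (A p ∩ G.neighborSet h).encard < (α : ℕ∞) := by
    by_contra hc
    push_neg at hc
    exact hnd ⟨hnotY, hc⟩
  -- claim: ∃ part r and b ∈ N(h) ∩ Y with b ∉ A r and (A r \ N(h)).encard ≥ δ
  have claim : ∃ r : Fin β, ∃ b, b ∈ (⋃ k', A k') ∧ b ∈ G.neighborSet h ∧ b ∉ A r ∧
      (δ : ℕ∞) ≤ (A r \ G.neighborSet h).encard := by
    by_cases hbp : ∃ b ∈ (⋃ k', A k') ∩ G.neighborSet h, b ∉ A p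
    · obtain ⟨b, ⟨hbY, hbN⟩, hbpne⟩ := hbp
      refine ⟨p, b, hbY, hbN, hbpne, ?_⟩
      exact enat_helper ((Set.encard_diff_add_encard_inter _ _).trans (hsize p)) hp (by omega)
    · push_neg at hbp
      obtain ⟨b, hbk, hbN⟩ := hne
      have hbY : b ∈ ⋃ k', A k' := Set.mem_iUnion.mpr ⟨k, hbk⟩
      have hkp : k = p := by
        by_contra hne'
        exact Set.disjoint_left.mp (hdis k p hne') hbk (hbp b ⟨hbY, hbN⟩)
      obtain ⟨r, hr⟩ := exists_other hβ k
      refine ⟨r, b, hbY, hbN, fun hbr => Set.disjoint_left.mp (hdis k r (Ne.symm hr)) hbk hbr, ?_⟩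
      have hempty : A r ∩ G.neighborSet h = ∅ := by
        ext x
        simp only [Set.mem_inter_iff, Set.mem_empty_iff_false, iff_false, not_and]
        intro hx hnx
        have := hbp x ⟨Set.mem_iUnion.mpr ⟨r, hx⟩, hnx⟩
        rw [← hkp] at this
        exact Set.disjoint_left.mp (hdis r k hr) hx this
      have : A r \ G.neighborSet h = A r := by
        ext x
        constructor
        · exact fun hx => hx.1
        · intro hx
          refine ⟨hx, fun hN => ?_⟩
          have hxx : x ∈ A r ∩ G.neighborSet h := ⟨hx, hN⟩
          rw [hempty] at hxx
          exact hxx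
      rw [this, hsize r]
      exact_mod_cast by omega
  obtain ⟨r, b, hbY, hbN, hbr, hpool⟩ := claim
  obtain ⟨l, hlinj, hl⟩ := exists_fin_inj_of_encard hpool
  obtain ⟨q, hq⟩ := Set.mem_iUnion.mp hbY
  have hqr : q ≠ r := fun e => hbr (e ▸ hq)
  refine ⟨b, l, hbY, hbN, fun m => Set.mem_iUnion.mpr ⟨r, (hl m).1⟩, hlinj,
    fun m => hcomp q r hqr b hq (l m) (hl m).1,
    fun m => (hl m).2,
    fun m => (hcomp q r hqr b hq (l m) (hl m).1).ne,
    fun m e => hnotY (Set.mem_iUnion.mpr ⟨r, e ▸ (hl m).1⟩),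
    fun m m' => hstab r (l m) (hl m).1 (l m') (hl m').1⟩

end St10

namespace St10

variable {V : Type} {G : SimpleGraph V} {α β ζ η n : ℕ}

lemma starB {δ : ℕ} (T : TemplateArray G α β ζ η n) (hT : T.Cleaned1)
    (hfree : TdeltaFree δ G) (hβ : 2 ≤ β) (hζ : η + δ ≤ ζ) (hη1 : 1 ≤ η)
    (w : V) (hw : w ∈ T.Vall) (F : Finset (Fin n))
    (hF : ∀ i ∈ F, w ∉ T.Hs i ∧ ∃ y ∈ T.Y i, G.Adj w y) :
    F.card < 2 * δ := by
  classical
  by_contra hc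
  push_neg at hc
  have hcard : Fintype.card (Fin δ ⊕ Fin δ) ≤ Fintype.card {x // x ∈ F} := by
    simp only [Fintype.card_sum, Fintype.card_fin, Fintype.card_coe]
    omega
  obtain ⟨ι⟩ := Function.Embedding.nonempty_of_card_le hcard
  set idx : Fin δ ⊕ Fin δ → Fin n := fun s => (ι s).1 with hidx
  have idx_inj : ∀ s s', s ≠ s' → idx s ≠ idx s' :=
    fun s s' h e => h (ι.injective (Subtype.ext e))
  have idx_mem : ∀ s, idx s ∈ F := fun s => (ι s).2
  have hsel : ∀ s, ∃ y, y ∈ T.Y (idx s) ∧ G.Adj w y := by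
    intro s
    obtain ⟨y, hy, ha⟩ := (hF _ (idx_mem s)).2
    exact ⟨y, hy, ha⟩
  choose yv hyY hyadj using hsel
  have hκ : ∀ s, ∃ κ, yv s ∈ T.A (idx s) κ := fun s => Set.mem_iUnion.mp (hyY s)
  choose κv hκv using hκ
  have hbd : ∀ s k, (T.A (idx s) k ∩ G.neighborSet w).encard < (η : ℕ∞) :=
    fun s k => PB T hT hη1 w hw _ (hF _ (idx_mem s)).1 k
  -- (1,δ)-brooms
  have hb1 : ∀ t : Fin δ, ∃ l : Fin δ → V,
      (∀ m, l m ∈ ⋃ k, T.A (idx (Sum.inl t)) k) ∧ Function.Injective l ∧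
      (∀ m, G.Adj (yv (Sum.inl t)) (l m)) ∧ (∀ m, ¬ G.Adj w (l m)) ∧
      (∀ m m', ¬ G.Adj (l m) (l m')) :=
    fun t => broomA1 _ (T.core _) hβ hζ w _ (hκv (Sum.inl t)) (hbd (Sum.inl t))
  choose l1 hl1Y hl1inj hl1adj hl1w hl1stab using hb1
  -- (2,δ)-brooms
  have hb2 : ∀ t : Fin δ, ∃ b, ∃ l : Fin δ → V,
      (b ∈ ⋃ k, T.A (idx (Sum.inr t)) k) ∧ G.Adj (yv (Sum.inr t)) b ∧ ¬ G.Adj w b ∧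
      yv (Sum.inr t) ≠ b ∧
      (∀ m, l m ∈ ⋃ k, T.A (idx (Sum.inr t)) k) ∧ Function.Injective l ∧
      (∀ m, G.Adj b (l m)) ∧ (∀ m, ¬ G.Adj (yv (Sum.inr t)) (l m)) ∧
      (∀ m, yv (Sum.inr t) ≠ l m) ∧ (∀ m, b ≠ l m) ∧ (∀ m, ¬ G.Adj w (l m)) ∧
      (∀ m m', ¬ G.Adj (l m) (l m')) :=
    fun t => broomA2 _ (T.core _) hβ hζ hη1 w _ (hκv (Sum.inr t)) (hbd (Sum.inr t))
  choose b2 l2 hb2Y hb2adj hb2w hb2ne hl2Y hl2inj hl2adj hl2ys hl2yne hl2bne hl2w hl2stab using hb2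
  exact build_T hfree w (fun t => yv (Sum.inl t)) l1 (fun t => yv (Sum.inr t)) b2 l2
    (fun s => T.Y (idx s))
    (fun s s' h => ((T.H_disj _ _ (idx_inj s s' h)).mono (T.core_subset _) (T.core_subset _)))
    (fun s hws => (hF _ (idx_mem s)).1 (T.core_subset _ hws))
    (fun t => hyY (Sum.inl t)) (fun t m => hl1Y t m)
    (fun t => hyY (Sum.inr t)) (fun t => hb2Y t) (fun t m => hl2Y t m)
    (fun t => hyadj (Sum.inl t)) (fun t => hyadj (Sum.inr t))
    hl1adj hb2adj hl2adj
    hl1w hb2w hl2w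
    hl1stab hl2ys hl2stab
    (fun s s' h x hx y hy => YY T (idx_inj s s' h) hx hy)
    hl1inj hl2inj hl2yne

lemma greedy {n : ℕ} (bad : Fin n → Fin n → Prop) (S₀ : Finset (Fin n)) (d : ℕ)
    (hbad : ∀ j ∈ S₀, ∀ F : Finset (Fin n), F ⊆ S₀ → (∀ i ∈ F, i < j ∧ bad i j) →
      F.card ≤ d) :
    ∀ (k : ℕ) (S : Finset (Fin n)), S ⊆ S₀ → (d + 1) * k ≤ S.card →
      ∃ Tc, Tc ⊆ S ∧ Tc.card = k ∧ ∀ i ∈ Tc, ∀ j ∈ Tc, i < j → ¬ bad i j := by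
  classical
  intro k
  induction k with
  | zero => exact fun S _ _ => ⟨∅, by simp⟩
  | succ k ih =>
    intro S hS hcard
    have hpos : 0 < S.card := by
      have : 0 < (d + 1) * (k + 1) := Nat.mul_pos (by omega) (by omega)
      omega
    have hne : S.Nonempty := Finset.card_pos.mp hpos
    set j := S.max' hne with hj
    have hjS : j ∈ S := S.max'_mem hne
    set B := (S.erase j).filter (fun i => bad i j) with hB
    have hBcard : B.card ≤ d := by
      refine hbad j (hS hjS) B ((Finset.filter_subset _ _).trans
        ((S.erase_subset j).trans hS)) ?_
      intro i hi
      have hi1 := Finset.mem_filter.mp hi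
      have hi2 := Finset.mem_erase.mp hi1.1
      exact ⟨lt_of_le_of_ne (S.le_max' i hi2.2) hi2.1, hi1.2⟩
    set S' := (S.erase j).filter (fun i => ¬ bad i j) with hS'
    have hS'card : (d + 1) * k ≤ S'.card := by
      have hsplit : S'.card + B.card = (S.erase j).card := by
        rw [hS', hB]
        have h := Finset.card_filter_add_card_filter_not
          (s := S.erase j) (p := fun i => bad i j)
        have he : (Finset.filter (fun a => ¬ (fun i => bad i j) a) (S.erase j)) =
            Finset.filter (fun i => ¬ bad i j) (S.erase j) := rfl
        rw [he] at h
        omega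
      have herase : (S.erase j).card = S.card - 1 := Finset.card_erase_of_mem hjS
      have hmul : (d + 1) * (k + 1) = (d + 1) * k + (d + 1) := by ring
      omega
    obtain ⟨Tc, hTS, hTcard, hTind⟩ := ih S'
      (((Finset.filter_subset _ _).trans ((S.erase_subset j).trans hS))) hS'card
    have hTS' : ∀ i ∈ Tc, i ∈ S' := fun i hi => hTS hi
    have hjnotT : j ∉ Tc := by
      intro hjT
      have := Finset.mem_erase.mp (Finset.mem_filter.mp (hTS hjT)).1
      exact this.1 rfl
    refine ⟨insert j Tc, ?_, ?_, ?_⟩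
    · intro x hx
      rcases Finset.mem_insert.mp hx with rfl | hx
      · exact hjS
      · exact (S.erase_subset j) (Finset.mem_filter.mp (hTS hx)).1
    · rw [Finset.card_insert_of_notMem hjnotT, hTcard]
    · intro i hi j' hj' hij
      rcases Finset.mem_insert.mp hi with rfl | hiT
      · rcases Finset.mem_insert.mp hj' with rfl | hj'T
        · exact absurd hij (lt_irrefl _)
        · have : j' ≤ j := S.le_max' j' ((S.erase_subset j) (Finset.mem_filter.mp (hTS hj'T)).1)
          exact absurd hij (not_lt.mpr this)
      · rcases Finset.mem_insert.mp hj' with rfl | hj'T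
        · exact (Finset.mem_filter.mp (hTS hiT)).2
        · exact hTind i hiT j' hj'T hij

end St10

open St10

/-- for η ≥ δ, ζ ≥ max(η,α)+δ, G satisfying (i)–(v), and a 1-cleaned
(ζ,η)-template array 𝒯 in G, each v ∈ V(𝒯) has a neighbour in H_i for fewer than
γ = (2δτ+1)(2δ+1) values of i. -/
theorem statement10 (τ α δ β ζ η : ℕ) (hα : 1 ≤ α) (hδ : 1 ≤ δ) (hβ : 2 ≤ β)
    (θ : ℕ → ℕ) (hθ : Monotone θ) (hη : δ ≤ η) (hζ : max η α + δ ≤ ζ)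
    (V : Type) (G : SimpleGraph V) (hG : Conditions τ α δ β θ G)
    (n : ℕ) (T : TemplateArray G α β ζ η n) (hT : T.Cleaned1)
    (v : V) (hv : v ∈ T.Vall) :
    {i : Fin n | ∃ h ∈ T.Hs i, G.Adj v h}.encard
      < (((2 * δ * τ + 1) * (2 * δ + 1) : ℕ) : ℕ∞) := by
  classical
  obtain ⟨hfree, hchi, -, -, -⟩ := hG
  have hη1 : 1 ≤ η := le_trans hδ hη
  have hζ1 : η + δ ≤ ζ := le_trans (Nat.add_le_add_right (le_max_left η α) δ) hζ
  have hζ2 : α + δ ≤ ζ := le_trans (Nat.add_le_add_right (le_max_right η α) δ) hζ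
  by_contra hcon
  push_neg at hcon
  have hfin : {i : Fin n | ∃ h ∈ T.Hs i, G.Adj v h}.Finite := Set.toFinite _
  set S : Finset (Fin n) := hfin.toFinset with hSdef
  have hmemS : ∀ i, i ∈ S ↔ ∃ h ∈ T.Hs i, G.Adj v h := by
    intro i; rw [hSdef, Set.Finite.mem_toFinset]; rfl
  have hScard0 : ((2 * δ * τ + 1) * (2 * δ + 1) : ℕ) ≤ S.card := by
    rw [hfin.encard_eq_coe_toFinset_card] at hcon
    exact_mod_cast hcon
  -- arithmetic atoms
  have hexp : (2 * δ * τ + 1) * (2 * δ + 1) = 4 * (δ * (δ * τ)) + 2 * (δ * τ) + 2 * δ + 1 := by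
    ring
  obtain ⟨q1, hq1⟩ : ∃ q, q = δ * (δ * τ) := ⟨_, rfl⟩
  obtain ⟨q2, hq2⟩ : ∃ q, q = δ * τ := ⟨_, rfl⟩
  obtain ⟨q4, hq4⟩ : ∃ q, q = δ * δ := ⟨_, rfl⟩
  have hq14 : 1 ≤ q4 := by rw [hq4]; nlinarith
  have hq41 : q4 * τ = q1 := by rw [hq4, hq1]; ring
  rw [hexp, ← hq1, ← hq2] at hScard0
  -- neighbour selection
  set hfun : Fin n → V := fun i =>
    if hi : ∃ x, x ∈ T.Hs i ∧ G.Adj v x then hi.choose else v with hfundef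
  have hfunHA : ∀ i ∈ S, hfun i ∈ T.Hs i ∧ G.Adj v (hfun i) := by
    intro i hiS
    have hex : ∃ x, x ∈ T.Hs i ∧ G.Adj v x := by
      obtain ⟨x, h1, h2⟩ := (hmemS i).mp hiS
      exact ⟨x, h1, h2⟩
    rw [hfundef]
    dsimp only
    rw [dif_pos hex]
    exact hex.choose_spec
  have hfunB : ∀ i, hfun i ∈ Ball2 G v := by
    intro i
    rw [hfundef]
    dsimp only
    split
    · next hex => exact Or.inr (Or.inl hex.choose_spec.2)
    · exact Or.inl rfl
  -- indices where v has a neighbour in the core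
  set SY := S.filter (fun i => ∃ y ∈ T.Y i, G.Adj v y) with hSYdef
  have hSYa : (SY.filter (fun i => v ∉ T.Hs i)).card < 2 * δ := by
    refine starB T hT hfree hβ hζ1 hη1 v hv _ ?_
    intro i hi
    have h1 := Finset.mem_filter.mp hi
    have h2 := Finset.mem_filter.mp h1.1
    exact ⟨h1.2, h2.2⟩
  have hSYb : (SY.filter (fun i => v ∈ T.Hs i)).card ≤ 1 := by
    refine Finset.card_le_one.mpr ?_
    intro a ha b hb
    have ha' := (Finset.mem_filter.mp ha).2
    have hb' := (Finset.mem_filter.mp hb).2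
    by_contra hne
    exact Set.disjoint_left.mp (T.H_disj a b hne) ha' hb'
  have hSYcard : SY.card ≤ 2 * δ := by
    have hpart := Finset.card_filter_add_card_filter_not
      (s := SY) (p := fun i => v ∈ T.Hs i)
    have he : (SY.filter (fun a => ¬ (fun i => v ∈ T.Hs i) a)) =
        SY.filter (fun i => v ∉ T.Hs i) := rfl
    rw [he] at hpart
    omega
  -- indices with neighbours only outside the core
  set SZ := (S \ SY).filter (fun i => v ∉ T.Hs i) with hSZdef
  have hSZsub : SZ ⊆ S := fun i hi =>
    (Finset.mem_sdiff.mp (Finset.mem_filter.mp hi).1).1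
  have hSZcard : 4 * q1 + 2 * q2 ≤ SZ.card := by
    have hv1 : ((S \ SY).filter (fun i => v ∈ T.Hs i)).card ≤ 1 := by
      refine Finset.card_le_one.mpr ?_
      intro a ha b hb
      have ha' := (Finset.mem_filter.mp ha).2
      have hb' := (Finset.mem_filter.mp hb).2
      by_contra hne
      exact Set.disjoint_left.mp (T.H_disj a b hne) ha' hb'
    have hSYS : SY ⊆ S := Finset.filter_subset _ _
    have hsd : (S \ SY).card = S.card - SY.card := Finset.card_sdiff_of_subset hSYS
    have hpart := Finset.card_filter_add_card_filter_not
      (s := S \ SY) (p := fun i => v ∈ T.Hs i)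
    have he : ((S \ SY).filter (fun a => ¬ (fun i => v ∈ T.Hs i) a)) = SZ := rfl
    rw [he] at hpart
    omega
  -- colouring and pigeonhole
  obtain ⟨C⟩ := SimpleGraph.chromaticNumber_le_iff_colorable.mp (hchi v)
  have hτ : 1 ≤ τ := by
    have := (C ⟨v, Or.inl rfl⟩).2
    omega
  set g : Fin n → Fin τ := fun i => C ⟨hfun i, hfunB i⟩ with hgdef
  obtain ⟨q3, hq3⟩ : ∃ q, q = τ * (4 * q4 - 1) := ⟨_, rfl⟩
  have hq3e : q3 + τ = 4 * q1 := by
    have h41 : 4 * q4 - 1 + 1 = 4 * q4 := by omega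
    calc q3 + τ = τ * ((4 * q4 - 1) + 1) := by rw [hq3]; ring
      _ = τ * (4 * q4) := by rw [h41]
      _ = 4 * q1 := by rw [← hq41]; ring
  have hpig : (Finset.univ : Finset (Fin τ)).card * (4 * q4 - 1) < SZ.card := by
    rw [Finset.card_univ, Fintype.card_fin, ← hq3]
    omega
  obtain ⟨c, -, hc⟩ := Finset.exists_lt_card_fiber_of_mul_lt_card_of_maps_to
    (fun a (_ : a ∈ SZ) => Finset.mem_univ (g a)) hpig
  set S1 := SZ.filter (fun i => g i = c) with hS1def
  have hS1card : 4 * q4 ≤ S1.card := by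
    have : 4 * q4 - 1 < S1.card := hc
    omega
  -- stability of the chosen neighbours
  have hstab : ∀ i ∈ S1, ∀ j ∈ S1, i ≠ j → ¬ G.Adj (hfun i) (hfun j) := by
    intro i hi j hj hij hadj
    have hgi : g i = c := (Finset.mem_filter.mp hi).2
    have hgj : g j = c := (Finset.mem_filter.mp hj).2
    have hadj' : (G.induce (Ball2 G v)).Adj ⟨hfun i, hfunB i⟩ ⟨hfun j, hfunB j⟩ := hadj
    exact (C.valid hadj') (hgi.trans hgj.symm)
  -- greedy selection avoiding "bad" pairs
  set bad : Fin n → Fin n → Prop :=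
    fun i j => ∃ y ∈ T.Y i, G.Adj (hfun j) y with hbaddef
  have hbad : ∀ j ∈ S1, ∀ F : Finset (Fin n), F ⊆ S1 →
      (∀ i ∈ F, i < j ∧ bad i j) → F.card ≤ 2 * δ - 1 := by
    intro j hj F hFS hFi
    have hjS : j ∈ S := hSZsub (Finset.mem_filter.mp hj).1
    have hjH : hfun j ∈ T.Hs j := (hfunHA j hjS).1
    have hw : hfun j ∈ T.Vall := mem_Vall_of_Hs T hjH
    have hFcard := starB T hT hfree hβ hζ1 hη1 (hfun j) hw F ?_
    · omega
    · intro i hiF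
      obtain ⟨hlt, hbd⟩ := hFi i hiF
      refine ⟨?_, hbd⟩
      intro hmem
      exact Set.disjoint_left.mp (T.H_disj j i (Ne.symm hlt.ne)) hjH hmem
  have h2δ : (2 * δ - 1 + 1) * (2 * δ) ≤ S1.card := by
    have h1 : 2 * δ - 1 + 1 = 2 * δ := by omega
    have h2 : (2 * δ) * (2 * δ) = 4 * q4 := by rw [hq4]; ring
    rw [h1, h2]
    exact hS1card
  obtain ⟨T2, hT2S, hT2card, hT2ind⟩ :=
    greedy bad S1 (2 * δ - 1) hbad (2 * δ) S1 (Finset.Subset.refl S1) h2δ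
  -- pick 2δ indices
  have hcard2 : Fintype.card (Fin δ ⊕ Fin δ) ≤ Fintype.card {x // x ∈ T2} := by
    simp only [Fintype.card_sum, Fintype.card_fin, Fintype.card_coe, hT2card]
    omega
  obtain ⟨ι⟩ := Function.Embedding.nonempty_of_card_le hcard2
  set idx : Fin δ ⊕ Fin δ → Fin n := fun s => (ι s).1 with hidxdef
  have idx_inj : ∀ s s', s ≠ s' → idx s ≠ idx s' :=
    fun s s' h e => h (ι.injective (Subtype.ext e))
  have idx_T2 : ∀ s, idx s ∈ T2 := fun s => (ι s).2
  have idx_S1 : ∀ s, idx s ∈ S1 := fun s => hT2S (idx_T2 s)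
  have idx_SZ : ∀ s, idx s ∈ SZ := fun s => (Finset.mem_filter.mp (idx_S1 s)).1
  have idx_S : ∀ s, idx s ∈ S := fun s => hSZsub (idx_SZ s)
  have idx_vH : ∀ s, v ∉ T.Hs (idx s) := fun s => (Finset.mem_filter.mp (idx_SZ s)).2
  have idx_nSY : ∀ s, ¬ ∃ y ∈ T.Y (idx s), G.Adj v y := by
    intro s
    have h1 := Finset.mem_sdiff.mp (Finset.mem_filter.mp (idx_SZ s)).1
    intro hy
    exact h1.2 (Finset.mem_filter.mpr ⟨h1.1, hy⟩)
  have idx_vY : ∀ s, ∀ y ∈ T.Y (idx s), ¬ G.Adj v y :=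
    fun s y hy hadj => idx_nSY s ⟨y, hy, hadj⟩
  have idx_H : ∀ s, hfun (idx s) ∈ T.Hs (idx s) := fun s => (hfunHA _ (idx_S s)).1
  have idx_A : ∀ s, G.Adj v (hfun (idx s)) := fun s => (hfunHA _ (idx_S s)).2
  have idx_hY : ∀ s, hfun (idx s) ∉ T.Y (idx s) :=
    fun s h => idx_nSY s ⟨_, h, idx_A s⟩
  have idx_mix : ∀ s, ∃ k,
      (η : ℕ∞) ≤ (T.A (idx s) k ∩ G.neighborSet (hfun (idx s))).encard :=
    fun s => (T.mixed _ _ (idx_H s)).2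
  have idx_nd : ∀ s, ¬ DenseTo G α (T.A (idx s)) (hfun (idx s)) :=
    fun s => hT _ _ (mem_Vall_of_Hs T (idx_H s))
  -- (1,δ)-brooms
  have hb1 : ∀ t : Fin δ, ∃ l : Fin δ → V,
      (∀ m, l m ∈ T.Y (idx (Sum.inl t))) ∧ Function.Injective l ∧
      (∀ m, G.Adj (hfun (idx (Sum.inl t))) (l m)) ∧
      (∀ m m', ¬ G.Adj (l m) (l m')) := by
    intro t
    obtain ⟨k, hk⟩ := idx_mix (Sum.inl t)
    have hδk : (δ : ℕ∞) ≤
        (T.A (idx (Sum.inl t)) k ∩ G.neighborSet (hfun (idx (Sum.inl t)))).encard :=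
      le_trans (by exact_mod_cast hη) hk
    obtain ⟨l, hinj, hl⟩ := exists_fin_inj_of_encard hδk
    exact ⟨l, fun m => Set.mem_iUnion.mpr ⟨k, (hl m).1⟩, hinj, fun m => (hl m).2,
      fun m m' => (T.core (idx (Sum.inl t))).2.2.1 k _ (hl m).1 _ (hl m').1⟩
  choose l1 hl1Y hl1inj hl1adj hl1stab using hb1
  -- (2,δ)-brooms
  have hb2 : ∀ t : Fin δ, ∃ b, ∃ l : Fin δ → V,
      (b ∈ ⋃ k', T.A (idx (Sum.inr t)) k') ∧ G.Adj (hfun (idx (Sum.inr t))) b ∧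
      (∀ m, l m ∈ ⋃ k', T.A (idx (Sum.inr t)) k') ∧ Function.Injective l ∧
      (∀ m, G.Adj b (l m)) ∧ (∀ m, ¬ G.Adj (hfun (idx (Sum.inr t))) (l m)) ∧
      (∀ m, b ≠ l m) ∧ (∀ m, hfun (idx (Sum.inr t)) ≠ l m) ∧
      (∀ m m', ¬ G.Adj (l m) (l m')) := by
    intro t
    obtain ⟨k, hk⟩ := idx_mix (Sum.inr t)
    exact broomB2 _ (T.core _) hβ hζ2 (by omega) hη1 _ (idx_hY (Sum.inr t)) hk
      (idx_nd (Sum.inr t))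
  choose bb ll hbbY hbbadj hllY hllinj hlladj hllh hbbne hlhne hllstab using hb2
  -- assemble T(δ)
  set Dset : Fin δ ⊕ Fin δ → Set V :=
    fun s => insert (hfun (idx s)) (T.Y (idx s)) with hDdef
  have hDsub : ∀ s, Dset s ⊆ T.Hs (idx s) := by
    intro s x hx
    rcases Set.mem_insert_iff.mp hx with rfl | hx
    · exact idx_H s
    · exact T.core_subset _ hx
  have hDd : ∀ s s', s ≠ s' → Disjoint (Dset s) (Dset s') :=
    fun s s' h => (T.H_disj _ _ (idx_inj s s' h)).mono (hDsub s) (hDsub s')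
  have hwD : ∀ s, v ∉ Dset s := by
    intro s hvD
    rcases Set.mem_insert_iff.mp hvD with he | hvY
    · exact (idx_A s).ne he
    · exact idx_vH s (T.core_subset _ hvY)
  have hcross : ∀ s s', s ≠ s' → ∀ x ∈ Dset s, ∀ y ∈ Dset s', ¬ G.Adj x y := by
    intro s s' hss x hx y hy
    have hij : idx s ≠ idx s' := idx_inj s s' hss
    rcases Set.mem_insert_iff.mp hx with rfl | hxY
    · rcases Set.mem_insert_iff.mp hy with rfl | hyY
      · exact hstab _ (idx_S1 s) _ (idx_S1 s') hij
      · rcases lt_or_gt_of_ne hij with hlt | hgt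
        · exact T.no_edge _ _ hlt _ (idx_H s) y hyY
        · intro hadj
          exact hT2ind _ (idx_T2 s') _ (idx_T2 s) hgt ⟨y, hyY, hadj⟩
    · rcases Set.mem_insert_iff.mp hy with rfl | hyY
      · intro hadj
        rcases lt_or_gt_of_ne hij with hlt | hgt
        · exact hT2ind _ (idx_T2 s) _ (idx_T2 s') hlt ⟨x, hxY, hadj.symm⟩
        · exact T.no_edge _ _ hgt _ (idx_H s') x hxY hadj.symm
      · exact YY T hij hxY hyY
  exact build_T hfree v (fun t => hfun (idx (Sum.inl t))) l1
    (fun t => hfun (idx (Sum.inr t))) bb ll Dset hDd hwD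
    (fun t => Set.mem_insert _ _) (fun t m => Set.mem_insert_of_mem _ (hl1Y t m))
    (fun t => Set.mem_insert _ _) (fun t => Set.mem_insert_of_mem _ (hbbY t))
    (fun t m => Set.mem_insert_of_mem _ (hllY t m))
    (fun t => idx_A (Sum.inl t)) (fun t => idx_A (Sum.inr t))
    hl1adj hbbadj hlladj
    (fun t m => idx_vY (Sum.inl t) _ (hl1Y t m))
    (fun t => idx_vY (Sum.inr t) _ (hbbY t))
    (fun t m => idx_vY (Sum.inr t) _ (hllY t m))
    hl1stab hllh hllstab
    hcross hl1inj hllinj hlhne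
end
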